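/- arXiv:1102.2232 — 4 statements merged into one kernel-verified Lean document; each statement's English description precedes it below -/
import Mathlib

section
/- Let Σ be a finite alphabet and let w : ℤ → Σ be a recurrent ℤ-word. Then there exists b : ℤ → {0,1} such that the ℤ-word w' over the alphabet Σ × {0,1} defined by w'(i) = (w(i), b(i)) has the following property (*): for every finite word u over Σ that occurs in every prefix and every suffix of w, every finite word u' over Σ × {0,1} whose letterwise projection to Σ equals u occurs in every prefix and every suffix of w'. -/
/-- The finite word `u` occurs at position `i` in the `ℤ`-word `w`. -/
def OccursAt {σ : Type*} (w : ℤ → σ) (u : List σ) (i : ℤ) : Prop :=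
  ∀ k : Fin u.length, w (i + (k : ℕ)) = u.get k

/-- The finite word `u` occurs in the `ℤ`-word `w`. -/
def OccursIn {σ : Type*} (w : ℤ → σ) (u : List σ) : Prop :=
  ∃ i : ℤ, OccursAt w u i

/-- `u` occurs in every prefix of `w`. -/
def InEveryPrefix {σ : Type*} (w : ℤ → σ) (u : List σ) : Prop :=
  ∀ n : ℤ, ∃ i : ℤ, i + u.length ≤ n ∧ OccursAt w u i

/-- `u` occurs in every suffix of `w`. -/
def InEverySuffix {σ : Type*} (w : ℤ → σ) (u : List σ) : Prop :=
  ∀ n : ℤ, ∃ i : ℤ, n ≤ i ∧ OccursAt w u i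

/-- A `ℤ`-word `w` is recurrent: for every regular language `X`, either no element
of `X` occurs in `w`, or every prefix and every suffix of `w` contains an
occurrence of some element of `X`. -/
def Recurrent {σ : Type*} (w : ℤ → σ) : Prop :=
  ∀ X : Language σ, X.IsRegular →
    (∀ u ∈ X, ¬ OccursIn w u) ∨
    (∀ n : ℤ, (∃ u ∈ X, ∃ i : ℤ, i + u.length ≤ n ∧ OccursAt w u i) ∧
              (∃ u ∈ X, ∃ i : ℤ, n ≤ i ∧ OccursAt w u i))

section Aux
variable {σ : Type*} (w : ℤ → σ) (e : ℕ → List (σ × Fin 2) × ℤ × Bool)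

def Good (u' : List (σ × Fin 2)) : Prop :=
  InEveryPrefix w (u'.map Prod.fst) ∧ InEverySuffix w (u'.map Prod.fst)

open Classical in
noncomputable def auxStep (r : List (σ × Fin 2) × ℤ × Bool) (s : ℤ × ℤ) :
    (ℤ × ℤ) × (ℤ × List (σ × Fin 2)) :=
  if h : Good w r.1 then
    if r.2.2 then
      ((s.1, (h.2 (max r.2.1 (s.2 + 1))).choose + r.1.length),
        ((h.2 (max r.2.1 (s.2 + 1))).choose, r.1))
    else
      (((h.1 (min r.2.1 s.1)).choose, s.2), ((h.1 (min r.2.1 s.1)).choose, r.1))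
  else (s, (0, []))

noncomputable def St : ℕ → ℤ × ℤ
  | 0 => (0, 0)
  | t + 1 => (auxStep w (e t) (St t)).1

noncomputable def Pl (t : ℕ) : ℤ × List (σ × Fin 2) := (auxStep w (e t) (St w e t)).2

lemma St_mono (t : ℕ) : (St w e (t + 1)).1 ≤ (St w e t).1 ∧ (St w e t).2 ≤ (St w e (t + 1)).2 := by
  show (auxStep w (e t) (St w e t)).1.1 ≤ _ ∧ _ ≤ (auxStep w (e t) (St w e t)).1.2
  unfold auxStep
  split_ifs with h hb
  · refine ⟨le_refl _, ?_⟩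
    have hc := (h.2 (max (e t).2.1 ((St w e t).2 + 1))).choose_spec.1
    have : (St w e t).2 + 1 ≤ (h.2 (max (e t).2.1 ((St w e t).2 + 1))).choose :=
      le_trans (le_max_right _ _) hc
    simp only
    omega
  · have hc := (h.1 (min (e t).2.1 (St w e t).1)).choose_spec.1
    have hlen : (0 : ℤ) ≤ (((e t).1.map Prod.fst).length : ℤ) := Int.natCast_nonneg _
    have : (h.1 (min (e t).2.1 (St w e t).1)).choose ≤ (St w e t).1 := by
      have := min_le_right (e t).2.1 (St w e t).1
      omega
    exact ⟨this, le_refl _⟩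
  · exact ⟨le_refl _, le_refl _⟩

lemma St_le (t : ℕ) : (St w e t).1 ≤ (St w e t).2 := by
  induction t with
  | zero => simp [St]
  | succ t ih =>
    have h := St_mono w e t
    omega

lemma St_mono_le {t t' : ℕ} (h : t ≤ t') :
    (St w e t').1 ≤ (St w e t).1 ∧ (St w e t).2 ≤ (St w e t').2 := by
  induction t' with
  | zero => simp_all
  | succ t' ih =>
    rcases Nat.lt_or_ge t (t' + 1) with hlt | hge
    · have h1 := ih (Nat.lt_succ_iff.mp hlt)
      have h2 := St_mono w e t'
      exact ⟨le_trans h2.1 h1.1, le_trans h1.2 h2.2⟩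
    · have : t = t' + 1 := le_antisymm h hge
      subst this; exact ⟨le_refl _, le_refl _⟩

lemma interval_spec (t : ℕ) (k : ℕ) (hk : k < (Pl w e t).2.length) :
    (St w e (t + 1)).1 ≤ (Pl w e t).1 + k ∧ (Pl w e t).1 + k < (St w e (t + 1)).2 ∧
      ((Pl w e t).1 + k < (St w e t).1 ∨ (St w e t).2 < (Pl w e t).1 + k) := by
  have hLR := St_le w e t
  have hSt : St w e (t + 1) = (auxStep w (e t) (St w e t)).1 := rfl
  have hPl : Pl w e t = (auxStep w (e t) (St w e t)).2 := rfl
  rw [hSt, hPl]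
  rw [hPl] at hk
  revert hk
  unfold auxStep
  split_ifs with h hb
  · dsimp only
    intro hk
    have hc := (h.2 (max (e t).2.1 ((St w e t).2 + 1))).choose_spec.1
    have hi : (St w e t).2 + 1 ≤ (h.2 (max (e t).2.1 ((St w e t).2 + 1))).choose :=
      le_trans (le_max_right _ _) hc
    have hklen : (k : ℤ) < ((e t).1.length : ℤ) := by exact_mod_cast hk
    have hk0 : (0 : ℤ) ≤ (k : ℤ) := Int.natCast_nonneg _
    omega
  · dsimp only
    intro hk
    have hc := (h.1 (min (e t).2.1 (St w e t).1)).choose_spec.1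
    have hc' : (h.1 (min (e t).2.1 (St w e t).1)).choose + ((e t).1.length : ℤ) ≤
        min (e t).2.1 (St w e t).1 := by simpa using hc
    clear hc
    have hklen : (k : ℤ) < ((e t).1.length : ℤ) := by exact_mod_cast hk
    have hk0 : (0 : ℤ) ≤ (k : ℤ) := Int.natCast_nonneg _
    have hmin := min_le_right (e t).2.1 (St w e t).1
    omega
  · intro hk; simp at hk

lemma interval_disjoint {t t' : ℕ} (hne : t ≠ t') {k k' : ℕ}
    (hk : k < (Pl w e t).2.length) (hk' : k' < (Pl w e t').2.length)
    (heq : (Pl w e t).1 + k = (Pl w e t').1 + k') : False := by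
  wlog hlt : t < t' generalizing t t' k k'
  · exact this hne.symm hk' hk heq.symm (by omega)
  have h1 := interval_spec w e t k hk
  have h2 := interval_spec w e t' k' hk'
  have h3 := St_mono_le w e (show t + 1 ≤ t' from hlt)
  omega

open Classical in
noncomputable def auxB : ℤ → Fin 2 := fun x =>
  if h : ∃ p : ℕ × ℕ, ∃ _ : p.2 < (Pl w e p.1).2.length, (Pl w e p.1).1 + p.2 = x then
    ((Pl w e h.choose.1).2.get ⟨h.choose.2, h.choose_spec.choose⟩).2
  else 0

lemma auxB_spec (t : ℕ) (k : ℕ) (hk : k < (Pl w e t).2.length) :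
    auxB w e ((Pl w e t).1 + k) = ((Pl w e t).2.get ⟨k, hk⟩).2 := by
  have hex : ∃ p : ℕ × ℕ, ∃ _ : p.2 < (Pl w e p.1).2.length,
      (Pl w e p.1).1 + p.2 = (Pl w e t).1 + k := ⟨(t, k), hk, rfl⟩
  unfold auxB
  rw [dif_pos hex]
  have key : ∀ (p : ℕ × ℕ) (hpp : p.2 < (Pl w e p.1).2.length),
      (Pl w e p.1).1 + p.2 = (Pl w e t).1 + k →
      ((Pl w e p.1).2.get ⟨p.2, hpp⟩).2 = ((Pl w e t).2.get ⟨k, hk⟩).2 := by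
    rintro ⟨a, b⟩ hpp hab
    by_cases hat : a = t
    · subst hat
      have hbk : b = k := by simp only at hab hpp; omega
      subst hbk
      rfl
    · exact absurd hab (fun hab => interval_disjoint w e hat hpp hk hab)
  exact key hex.choose hex.choose_spec.choose hex.choose_spec.choose_spec

lemma Pl_occurs (t : ℕ) (h : Good w (e t).1) :
    OccursAt (fun i => (w i, auxB w e i)) (e t).1 (Pl w e t).1 ∧
      (if (e t).2.2 then (e t).2.1 ≤ (Pl w e t).1
       else (Pl w e t).1 + (e t).1.length ≤ (e t).2.1) := by
  have hPl : (Pl w e t).2 = (e t).1 ∧ OccursAt w ((e t).1.map Prod.fst) (Pl w e t).1 ∧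
      (if (e t).2.2 then (e t).2.1 ≤ (Pl w e t).1
       else (Pl w e t).1 + (e t).1.length ≤ (e t).2.1) := by
    have hPleq : Pl w e t = (auxStep w (e t) (St w e t)).2 := rfl
    rw [hPleq]
    unfold auxStep
    rw [dif_pos h]
    by_cases hb : (e t).2.2 = true
    · rw [if_pos hb, if_pos hb]
      have hc := (h.2 (max (e t).2.1 ((St w e t).2 + 1))).choose_spec
      exact ⟨rfl, hc.2, le_trans (le_max_left _ _) hc.1⟩
    · rw [if_neg hb, if_neg hb]
      have hc := (h.1 (min (e t).2.1 (St w e t).1)).choose_spec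
      refine ⟨rfl, hc.2, ?_⟩
      have h2 : (h.1 (min (e t).2.1 (St w e t).1)).choose + ((e t).1.length : ℤ) ≤
          min (e t).2.1 (St w e t).1 := by simpa using hc.1
      have hmin := min_le_left (e t).2.1 (St w e t).1
      dsimp only
      omega
  refine ⟨?_, hPl.2.2⟩
  intro kk
  have hk : (kk : ℕ) < (Pl w e t).2.length := by rw [hPl.1]; exact kk.2
  have hb := auxB_spec w e t kk hk
  have hw := hPl.2.1 ⟨kk, by rw [List.length_map]; exact kk.2⟩
  simp only [List.get_eq_getElem, List.getElem_map] at hw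
  have h2 : ∀ (l : List (σ × Fin 2)) (hl : l = (e t).1) (hkl : (kk : ℕ) < l.length),
      l.get ⟨kk, hkl⟩ = (e t).1.get kk := by
    rintro l rfl hkl; rfl
  show (w ((Pl w e t).1 + (kk : ℕ)), auxB w e ((Pl w e t).1 + (kk : ℕ))) = (e t).1.get kk
  rw [hb, h2 (Pl w e t).2 hPl.1 hk, hw]
  simp [List.get_eq_getElem]

end Aux

/-- For every recurrent `ℤ`-word `w` over a finite alphabet `σ` there is
`b : ℤ → {0,1}` such that the `ℤ`-word `w'(i) = (w i, b i)` over `σ × {0,1}`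
has property (*): every finite word `u` over `σ` that occurs in every prefix
and every suffix of `w` is such that every word `u'` over `σ × {0,1}` whose
letterwise projection to `σ` is `u` occurs in every prefix and every suffix
of `w'`. -/
theorem stmt_0 {σ : Type*} [Fintype σ] (w : ℤ → σ) (hw : Recurrent w) :
    ∃ b : ℤ → Fin 2,
      ∀ u : List σ, InEveryPrefix w u → InEverySuffix w u →
        ∀ u' : List (σ × Fin 2), u'.map Prod.fst = u →
          InEveryPrefix (fun i => (w i, b i)) u' ∧
          InEverySuffix (fun i => (w i, b i)) u' := by
  obtain ⟨e, he⟩ : ∃ e : ℕ → List (σ × Fin 2) × ℤ × Bool, Function.Surjective e := by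
    have h1 : Countable σ := Finite.to_countable
    have h2 : Nonempty (List (σ × Fin 2) × ℤ × Bool) := ⟨([], 0, false)⟩
    exact exists_surjective_nat _
  refine ⟨auxB w e, ?_⟩
  intro u hp hs u' hproj
  have hg : Good w u' := by rw [Good, hproj]; exact ⟨hp, hs⟩
  constructor
  · intro n
    obtain ⟨t, ht⟩ := he (u', n, false)
    have hG : Good w (e t).1 := by rw [ht]; exact hg
    have hocc := Pl_occurs w e t hG
    rw [ht] at hocc
    simp only [Bool.false_eq_true, if_false] at hocc
    exact ⟨(Pl w e t).1, hocc.2, hocc.1⟩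
  · intro n
    obtain ⟨t, ht⟩ := he (u', n, true)
    have hG : Good w (e t).1 := by rw [ht]; exact hg
    have hocc := Pl_occurs w e t hG
    rw [ht] at hocc
    simp only [if_true] at hocc
    exact ⟨(Pl w e t).1, hocc.2, hocc.1⟩
end

section
/- Let (A, <) be an infinite linear order such that there is no order embedding of ℚ into A (i.e., A is scattered). Then A contains an order-connected subset that is order-isomorphic to ℕ or to ℕ with the reversed order. -/
section ScatteredAux

variable {B : Type*} [LinearOrder B]

/-- The condensation relation: `a` and `b` are related if the interval between them is finite. -/
private def scatR (a b : B) : Prop := (Set.uIcc a b).Finite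

private lemma scatR_refl (a : B) : scatR a a := by simp [scatR]

private lemma scatR_symm {a b : B} (h : scatR a b) : scatR b a := by
  rwa [scatR, Set.uIcc_comm]

private lemma scatR_trans {a b c : B} (hab : scatR a b) (hbc : scatR b c) : scatR a c :=
  (hab.union hbc).subset Set.uIcc_subset_uIcc_union_uIcc

private def scatSetoid (B : Type*) [LinearOrder B] : Setoid B :=
  ⟨scatR, fun a => scatR_refl a, scatR_symm, scatR_trans⟩

private lemma scat_le_wd {a b a' b' : B} (ha : scatR a a') (hb : scatR b b')
    (hab : a ≤ b) (h : ¬ scatR a' b') : a' ≤ b' := by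
  by_contra h'
  push_neg at h'
  apply h
  rw [scatR, Set.uIcc_of_ge h'.le]
  refine (hb.union ha).subset ?_
  intro t ht
  rcases le_or_gt t b with htb | hbt
  · exact Or.inl (Set.mem_uIcc.mpr (Or.inr ⟨ht.1, htb⟩))
  · exact Or.inr (Set.mem_uIcc.mpr (Or.inl ⟨hab.trans hbt.le, ht.2⟩))

private def scatLe : Quotient (scatSetoid B) → Quotient (scatSetoid B) → Prop :=
  Quotient.lift₂ (fun a b => a ≤ b ∨ scatR a b) (by
    intro a b a' b' ha hb
    simp only [eq_iff_iff]
    constructor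
    · rintro (h | h)
      · by_cases h' : scatR a' b'
        · exact Or.inr h'
        · exact Or.inl (scat_le_wd ha hb h h')
      · exact Or.inr (scatR_trans (scatR_trans (scatR_symm ha) h) hb)
    · rintro (h | h)
      · by_cases h' : scatR a b
        · exact Or.inr h'
        · exact Or.inl (scat_le_wd (scatR_symm ha) (scatR_symm hb) h h')
      · exact Or.inr (scatR_trans (scatR_trans ha h) (scatR_symm hb)))

noncomputable instance : LinearOrder (Quotient (scatSetoid B)) where
  le := scatLe
  lt a b := scatLe a b ∧ ¬ scatLe b a
  lt_iff_le_not_ge _ _ := Iff.rfl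
  le_refl a := Quotient.inductionOn a fun a => Or.inl le_rfl
  le_trans a b c := Quotient.inductionOn₃ a b c (fun a b c hab hbc => by
    rcases hab with hab | hab
    · rcases hbc with hbc | hbc
      · exact Or.inl (hab.trans hbc)
      · rcases le_or_gt a c with h | h
        · exact Or.inl h
        · refine Or.inr ?_
          have : Set.uIcc a c ⊆ Set.uIcc b c := by
            rw [Set.uIcc_of_ge h.le, Set.uIcc_comm, Set.uIcc_of_le (h.le.trans hab)]
            exact Set.Icc_subset_Icc_right hab
          exact hbc.subset (Set.uIcc_comm b c ▸ this)
    · rcases hbc with hbc | hbc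
      · rcases le_or_gt a c with h | h
        · exact Or.inl h
        · refine Or.inr ?_
          have : Set.uIcc a c ⊆ Set.uIcc a b := by
            rw [Set.uIcc_of_ge h.le, Set.uIcc_of_ge (hbc.trans h.le)]
            exact Set.Icc_subset_Icc_left hbc
          exact hab.subset this
      · exact Or.inr (scatR_trans hab hbc))
  le_antisymm a b := Quotient.inductionOn₂ a b (fun a b hab hba => by
    rcases hab with hab | hab
    · rcases hba with hba | hba
      · exact congrArg _ (le_antisymm hab hba)
      · exact Quotient.sound (scatR_symm hba)
    · exact Quotient.sound hab)
  le_total a b := Quotient.inductionOn₂ a b (fun a b =>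
    (le_total a b).imp Or.inl Or.inl)
  toDecidableLE := Classical.decRel _

private lemma aux_nat_type {C : Type*} [LinearOrder C] [Infinite C]
    (h : ∀ a b : C, (Set.Icc a b).Finite) (b0 : C) (hb0 : ∀ y, b0 ≤ y) :
    Nonempty (C ≃o ℕ) := by
  letI : LocallyFiniteOrder C := LocallyFiniteOrder.ofFiniteIcc h
  letI : OrderBot C := { bot := b0, bot_le := hb0 }
  haveI : NoMaxOrder C := by
    constructor
    intro a
    by_contra hmax
    push_neg at hmax
    have huniv : (Set.univ : Set C).Finite :=
      (h b0 a).subset (fun t _ => ⟨hb0 t, hmax t⟩)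
    haveI := Set.finite_univ_iff.mp huniv
    exact not_finite C
  letI := LinearLocallyFiniteOrder.succOrder C
  letI := LinearLocallyFiniteOrder.predOrder C
  exact ⟨orderIsoNatOfLinearSuccPredArch⟩

private lemma aux_natdual_type {C : Type*} [LinearOrder C] [Infinite C]
    (h : ∀ a b : C, (Set.Icc a b).Finite) (t0 : C) (ht0 : ∀ y, y ≤ t0) :
    Nonempty (C ≃o ℕᵒᵈ) := by
  letI : LocallyFiniteOrder C := LocallyFiniteOrder.ofFiniteIcc h
  letI : OrderTop C := { top := t0, le_top := ht0 }
  haveI : NoMinOrder C := by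
    constructor
    intro a
    by_contra hmin
    push_neg at hmin
    have huniv : (Set.univ : Set C).Finite :=
      (h a t0).subset (fun t _ => ⟨hmin t, ht0 t⟩)
    haveI := Set.finite_univ_iff.mp huniv
    exact not_finite C
  letI := LinearLocallyFiniteOrder.succOrder Cᵒᵈ
  letI := LinearLocallyFiniteOrder.predOrder Cᵒᵈ
  exact ⟨(OrderIso.dualDual C).trans (orderIsoNatOfLinearSuccPredArch (ι := Cᵒᵈ)).dual⟩

private lemma aux_nat (S : Set B) (hinf : S.Infinite) (x : B) (hxS : x ∈ S)
    (hx : ∀ y ∈ S, x ≤ y) (hfin : ∀ y ∈ S, (Set.Icc x y).Finite) :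
    Nonempty (S ≃o ℕ) := by
  haveI := hinf.to_subtype
  have h : ∀ a b : S, (Set.Icc a b).Finite := by
    intro a b
    have h1 : (Set.Icc (a : B) (b : B)).Finite :=
      (hfin b b.2).subset (Set.Icc_subset_Icc_left (hx a a.2))
    have h2 : (Subtype.val ⁻¹' Set.Icc (a : B) (b : B) : Set S).Finite :=
      h1.preimage Subtype.val_injective.injOn
    refine h2.subset ?_
    intro t ht
    exact ⟨Subtype.coe_le_coe.mpr ht.1, Subtype.coe_le_coe.mpr ht.2⟩
  exact aux_nat_type h ⟨x, hxS⟩ (fun y => hx y y.2)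

private lemma aux_natdual (S : Set B) (hinf : S.Infinite) (x : B) (hxS : x ∈ S)
    (hx : ∀ y ∈ S, y ≤ x) (hfin : ∀ y ∈ S, (Set.Icc y x).Finite) :
    Nonempty (S ≃o ℕᵒᵈ) := by
  haveI := hinf.to_subtype
  have h : ∀ a b : S, (Set.Icc a b).Finite := by
    intro a b
    have h1 : (Set.Icc (a : B) (b : B)).Finite :=
      (hfin a a.2).subset (Set.Icc_subset_Icc_right (hx b b.2))
    have h2 : (Subtype.val ⁻¹' Set.Icc (a : B) (b : B) : Set S).Finite :=
      h1.preimage Subtype.val_injective.injOn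
    refine h2.subset ?_
    intro t ht
    exact ⟨Subtype.coe_le_coe.mpr ht.1, Subtype.coe_le_coe.mpr ht.2⟩
  exact aux_natdual_type h ⟨x, hxS⟩ (fun y => hx y y.2)

end ScatteredAux

/-- An infinite scattered linear order (no order embedding of `ℚ` into it)
contains an order-connected subset order-isomorphic to `ℕ` or to `ℕ` with the
reversed order. -/
theorem stmt_5 {A : Type*} [LinearOrder A] [Infinite A] (hscat : IsEmpty (ℚ ↪o A)) :
    ∃ I : Set A, I.OrdConnected ∧ (Nonempty (I ≃o ℕ) ∨ Nonempty (I ≃o ℕᵒᵈ)) := by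
  letI inst : LinearOrder (Quotient (scatSetoid A)) := inferInstance
  letI : Preorder (Quotient (scatSetoid A)) := inst.toPreorder
  letI : LE (Quotient (scatSetoid A)) := inst.toLE
  letI : LT (Quotient (scatSetoid A)) := inst.toLT
  by_cases hcls : ∀ a : A, {b | scatR a b}.Finite
  · -- all condensation classes finite: quotient is dense, embed ℚ, contradiction
    exfalso
    haveI : Nontrivial (Quotient (scatSetoid A)) := by
      obtain ⟨a⟩ := (inferInstance : Nonempty A)
      obtain ⟨b, hb⟩ := (hcls a).infinite_compl.nonempty
      exact ⟨⟦a⟧, ⟦b⟧, fun hEq => hb (Quotient.exact hEq)⟩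
    haveI : DenselyOrdered (Quotient (scatSetoid A)) := by
      constructor
      intro p q
      refine Quotient.inductionOn₂ p q ?_
      intro a b hab
      rw [lt_iff_le_not_ge] at hab
      have h1 : a ≤ b ∨ scatR a b := hab.1
      have h2 : ¬ (b ≤ a ∨ scatR b a) := hab.2
      have hnr : ¬ scatR a b := fun h => h2 (Or.inr (scatR_symm h))
      have hlt : a < b := by
        rcases h1 with h1 | h1
        · exact lt_of_le_not_ge h1 (fun h => h2 (Or.inl h))
        · exact absurd h1 hnr
      have hI : (Set.Icc a b).Infinite := by
        intro hf
        exact hnr (by rw [scatR, Set.uIcc_of_le hlt.le]; exact hf)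
      obtain ⟨c, hcI, hc⟩ := (hI.diff ((hcls a).union (hcls b))).nonempty
      rw [Set.mem_union] at hc
      push_neg at hc
      refine ⟨⟦c⟧, ?_, ?_⟩
      · rw [lt_iff_le_not_ge]
        refine ⟨Or.inl hcI.1, ?_⟩
        rintro (h | h)
        · exact hc.1 (le_antisymm h hcI.1 ▸ scatR_refl a)
        · exact hc.1 (scatR_symm h)
      · rw [lt_iff_le_not_ge]
        refine ⟨Or.inl hcI.2, ?_⟩
        rintro (h | h)
        · exact hc.2 (le_antisymm hcI.2 h ▸ scatR_refl b)
        · exact hc.2 h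
    obtain ⟨f⟩ := Order.embedding_from_countable_to_dense (α := ℚ)
      (β := Quotient (scatSetoid A))
    refine hscat.false (OrderEmbedding.ofStrictMono (fun q => (f q).out) ?_)
    intro q q' hq
    have hlt : (⟦(f q).out⟧ : Quotient (scatSetoid A)) < ⟦(f q').out⟧ := by
      rw [Quotient.out_eq, Quotient.out_eq]
      exact f.lt_iff_lt.mpr hq
    rw [lt_iff_le_not_ge] at hlt
    have h2 : ¬ ((f q').out ≤ (f q).out ∨ scatR (f q').out (f q).out) := hlt.2
    exact lt_of_not_ge (fun h => h2 (Or.inl h))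
  · push_neg at hcls
    obtain ⟨a, ha⟩ := hcls
    have hsub : {b | scatR a b} ⊆ {b | a ≤ b ∧ (Set.Icc a b).Finite} ∪
        {b | b ≤ a ∧ (Set.Icc b a).Finite} := by
      intro b hb
      rcases le_total a b with h | h
      · exact Or.inl ⟨h, Set.uIcc_of_le h ▸ hb⟩
      · exact Or.inr ⟨h, Set.uIcc_of_ge h ▸ hb⟩
    have hor : {b | a ≤ b ∧ (Set.Icc a b).Finite}.Infinite ∨
        {b | b ≤ a ∧ (Set.Icc b a).Finite}.Infinite := by
      by_contra h
      push_neg at h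
      exact ha ((h.1.union h.2).subset hsub)
    rcases hor with hS | hS
    · refine ⟨_, ?_, Or.inl (aux_nat _ hS a ⟨le_rfl, by simp⟩
        (fun y hy => hy.1) (fun y hy => hy.2))⟩
      exact ⟨fun y hy z hz t ht => ⟨hy.1.trans ht.1, hz.2.subset (Set.Icc_subset_Icc_right ht.2)⟩⟩
    · refine ⟨_, ?_, Or.inr (aux_natdual _ hS a ⟨le_rfl, by simp⟩
        (fun y hy => hy.1) (fun y hy => hy.2))⟩
      exact ⟨fun y hy z hz t ht => ⟨ht.2.trans hz.1, hy.2.subset (Set.Icc_subset_Icc_left ht.1)⟩⟩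
end

section
/- Let M = (A, <, P₁, …, Pₙ) be a labelled linear ordering, let I be an order-connected subset (interval) of A, and let Q ⊆ A. If Q is MSO-definable in M, then Q ∩ I is MSO-definable in the substructure M_I with domain I. -/
namespace Paper

/-! ## Syntax and semantics of monadic second-order logic over labelled linear orders

A labelled linear ordering `M = (A, <, P₁, …, Pₙ)` is represented by a type `A`,
a binary relation `r : A → A → Prop` (the order) and `P : Fin n → Set A`
(the unary predicates). -/

/-- MSO formulas over the signature `{<, P₀, …, P_{n-1}}`.  First-order
variables and second-order (set) variables are both indexed by `ℕ`. -/
inductive MSO (n : ℕ) : Type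
  | lt (i j : ℕ) : MSO n
  | pred (k : Fin n) (i : ℕ) : MSO n
  | mem (i j : ℕ) : MSO n
  | not (φ : MSO n) : MSO n
  | and (φ ψ : MSO n) : MSO n
  | ex1 (i : ℕ) (φ : MSO n) : MSO n
  | ex2 (j : ℕ) (φ : MSO n) : MSO n

namespace MSO

variable {n : ℕ}

/-- Satisfaction of an MSO formula in the structure `(A, r, P)` under the
first-order assignment `v` and the second-order assignment `V`. -/
def Sat {A : Type} (r : A → A → Prop) (P : Fin n → Set A)
    (v : ℕ → A) (V : ℕ → Set A) : MSO n → Prop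
  | lt i j => r (v i) (v j)
  | pred k i => v i ∈ P k
  | mem i j => v i ∈ V j
  | not φ => ¬ Sat r P v V φ
  | and φ ψ => Sat r P v V φ ∧ Sat r P v V ψ
  | ex1 i φ => ∃ a : A, Sat r P (Function.update v i a) V φ
  | ex2 j φ => ∃ S : Set A, Sat r P v (Function.update V j S) φ

/-- Quantifier depth of an MSO formula. -/
def qd : MSO n → ℕ
  | lt _ _ => 0
  | pred _ _ => 0
  | mem _ _ => 0
  | not φ => qd φ
  | and φ ψ => max (qd φ) (qd ψ)
  | ex1 _ φ => qd φ + 1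
  | ex2 _ φ => qd φ + 1

/-- Free first-order variables of an MSO formula. -/
def fv1 : MSO n → Finset ℕ
  | lt i j => {i, j}
  | pred _ i => {i}
  | mem i _ => {i}
  | not φ => fv1 φ
  | and φ ψ => fv1 φ ∪ fv1 ψ
  | ex1 i φ => fv1 φ \ {i}
  | ex2 _ φ => fv1 φ

/-- Free second-order variables of an MSO formula. -/
def fv2 : MSO n → Finset ℕ
  | lt _ _ => ∅
  | pred _ _ => ∅
  | mem _ j => {j}
  | not φ => fv2 φ
  | and φ ψ => fv2 φ ∪ fv2 ψ
  | ex1 _ φ => fv2 φ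
  | ex2 j φ => fv2 φ \ {j}

/-- A sentence is a formula with no free variables. -/
def IsSentence (φ : MSO n) : Prop := fv1 φ = ∅ ∧ fv2 φ = ∅

/-- A sentence `φ` is true in the structure `(A, r, P)`. -/
def TrueIn {A : Type} (r : A → A → Prop) (P : Fin n → Set A) (φ : MSO n) : Prop :=
  ∀ (v : ℕ → A) (V : ℕ → Set A), Sat r P v V φ

/-- `Q ⊆ A` is MSO-definable in `(A, r, P)`: there is a formula `φ(x)` whose only
free variable is the first-order variable `0` defining `Q`. -/
def Definable {A : Type} (r : A → A → Prop) (P : Fin n → Set A) (Q : Set A) : Prop :=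
  ∃ φ : MSO n, fv1 φ ⊆ {0} ∧ fv2 φ = ∅ ∧
    ∀ a : A, a ∈ Q ↔ ∀ (v : ℕ → A) (V : ℕ → Set A), Sat r P (Function.update v 0 a) V φ

/-- A Gödel numbering of MSO formulas. -/
def encode : MSO n → ℕ
  | lt i j => Nat.pair 0 (Nat.pair i j)
  | pred k i => Nat.pair 1 (Nat.pair k i)
  | mem i j => Nat.pair 2 (Nat.pair i j)
  | not φ => Nat.pair 3 (encode φ)
  | and φ ψ => Nat.pair 4 (Nat.pair (encode φ) (encode ψ))
  | ex1 i φ => Nat.pair 5 (Nat.pair i (encode φ))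
  | ex2 j φ => Nat.pair 6 (Nat.pair j (encode φ))

/-- The MSO theory of the structure `(A, r, P)`, as a set of Gödel codes of the true
sentences. -/
def TheoryCodes {A : Type} (r : A → A → Prop) (P : Fin n → Set A) : Set ℕ :=
  {c | ∃ φ : MSO n, IsSentence φ ∧ encode φ = c ∧ TrueIn r P φ}

/-- Two structures have the same `k`-type: they satisfy the same MSO sentences of
quantifier depth `≤ k`. -/
def EquivType (k : ℕ) {A B : Type} (r : A → A → Prop) (P : Fin n → Set A)
    (s : B → B → Prop) (Q : Fin n → Set B) : Prop :=
  ∀ φ : MSO n, IsSentence φ → qd φ ≤ k → (TrueIn r P φ ↔ TrueIn s Q φ)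

/-- The `k`-type of a structure, as the set of Gödel codes of the true sentences
of quantifier depth `≤ k`. -/
def TypeSet (k : ℕ) {A : Type} (r : A → A → Prop) (P : Fin n → Set A) : Set ℕ :=
  {c | ∃ φ : MSO n, IsSentence φ ∧ qd φ ≤ k ∧ encode φ = c ∧ TrueIn r P φ}

end MSO

/-- The order relation of the substructure with domain `S`. -/
def subRel {A : Type} (r : A → A → Prop) (S : Set A) : S → S → Prop :=
  fun x y => r x y

/-- The predicates of the substructure with domain `S`. -/
def subPred {A : Type} {n : ℕ} (P : Fin n → Set A) (S : Set A) : Fin n → Set S :=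
  fun k => {x : S | (x : A) ∈ P k}

/-! ## Relative computability -/

/-- Partial recursiveness relative to an oracle `O` (Kleene-style, following
the definition of `Nat.Partrec`, with an extra base case for the oracle). -/
inductive RecursiveIn (O : ℕ →. ℕ) : (ℕ →. ℕ) → Prop
  | zero : RecursiveIn O (pure 0)
  | succ : RecursiveIn O ↑Nat.succ
  | left : RecursiveIn O ↑fun n : ℕ => n.unpair.1
  | right : RecursiveIn O ↑fun n : ℕ => n.unpair.2
  | oracle : RecursiveIn O O
  | pair {f g} : RecursiveIn O f → RecursiveIn O g →
      RecursiveIn O fun n => Nat.pair <$> f n <*> g n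
  | comp {f g} : RecursiveIn O f → RecursiveIn O g →
      RecursiveIn O fun n => g n >>= f
  | prec {f g} : RecursiveIn O f → RecursiveIn O g →
      RecursiveIn O (Nat.unpaired fun a m =>
        m.rec (f a) fun y IH => do let i ← IH; g (Nat.pair a (Nat.pair y i)))
  | rfind {f} : RecursiveIn O f →
      RecursiveIn O fun a => Nat.rfind fun m => (fun x => x = 0) <$> f (Nat.pair a m)

/-- The characteristic (partial) function of a set of naturals. -/
noncomputable def chi (S : Set ℕ) : ℕ →. ℕ :=
  fun m => Part.some (S.indicator (fun _ => 1) m)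

/-- `S` is recursive in (Turing reducible to) `T`. -/
def TuringRed (S T : Set ℕ) : Prop := RecursiveIn (chi T) (chi S)

/-- The (recursive) join of a finite family of sets of naturals. -/
def finJoin {m : ℕ} (P : Fin m → Set ℕ) : Set ℕ :=
  {c | ∃ i : Fin m, ∃ x : ℕ, c = Nat.pair i x ∧ x ∈ P i}

/-- The (recursive) join of two sets of naturals. -/
def setJoin (S T : Set ℕ) : Set ℕ :=
  {c | (∃ a, c = 2 * a ∧ a ∈ S) ∨ (∃ a, c = 2 * a + 1 ∧ a ∈ T)}

/-- A set of naturals is decidable (computable). -/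
def DecidableSet (S : Set ℕ) : Prop := ComputablePred (· ∈ S)

/-! ## Homogeneous sets for labelled orderings of the naturals -/

/-- `H = {h 0 < h 1 < ⋯}` is `k`-homogeneous for `(ℕ, <, P)`:
all substructures `M_{[h i, h j)}`, `i < j`, have the same `k`-type. -/
def KHomogeneous {n : ℕ} (P : Fin n → Set ℕ) (h : ℕ → ℕ) (k : ℕ) : Prop :=
  ∀ i j i' j' : ℕ, i < j → i' < j' →
    MSO.EquivType k
      (subRel (· < ·) (Set.Ico (h i) (h j))) (subPred P (Set.Ico (h i) (h j)))
      (subRel (· < ·) (Set.Ico (h i') (h j'))) (subPred P (Set.Ico (h i') (h j')))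

/-- `H = {h 0 < h 1 < ⋯}` is uniformly homogeneous for `(ℕ, <, P)`:
for each `k`, the set `{h k < h (k+1) < ⋯}` is `k`-homogeneous. -/
def UniformlyHomogeneous {n : ℕ} (P : Fin n → Set ℕ) (h : ℕ → ℕ) : Prop :=
  StrictMono h ∧
  ∀ k : ℕ, KHomogeneous P (fun i => h (k + i)) k

/-! ## ℤ-words -/

/-- The finite word `u` occurs at position `i` in the `ℤ`-word `w`. -/
def OccursAt {σ : Type} (w : ℤ → σ) (u : List σ) (i : ℤ) : Prop :=
  ∀ k : Fin u.length, w (i + (k : ℕ)) = u.get k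

/-- The finite word `u` occurs in the `ℤ`-word `w`. -/
def OccursIn {σ : Type} (w : ℤ → σ) (u : List σ) : Prop :=
  ∃ i : ℤ, OccursAt w u i

/-- `u` occurs in every prefix of `w`. -/
def InEveryPrefix {σ : Type} (w : ℤ → σ) (u : List σ) : Prop :=
  ∀ n : ℤ, ∃ i : ℤ, i + u.length ≤ n ∧ OccursAt w u i

/-- `u` occurs in every suffix of `w`. -/
def InEverySuffix {σ : Type} (w : ℤ → σ) (u : List σ) : Prop :=
  ∀ n : ℤ, ∃ i : ℤ, n ≤ i ∧ OccursAt w u i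

/-- A `ℤ`-word `w` is recurrent: for every regular language `X`, either no element
of `X` occurs in `w`, or every prefix and every suffix of `w` contains an
occurrence of some element of `X`. -/
def Recurrent {σ : Type} (w : ℤ → σ) : Prop :=
  ∀ X : Language σ, X.IsRegular →
    (∀ u ∈ X, ¬ OccursIn w u) ∨
    (∀ n : ℤ, (∃ u ∈ X, ∃ i : ℤ, i + u.length ≤ n ∧ OccursAt w u i) ∧
              (∃ u ∈ X, ∃ i : ℤ, n ≤ i ∧ OccursAt w u i))

/-- The `ℤ`-word `w(M)` over the alphabet `{0,1}ⁿ` associated with the labelled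
linear ordering `M = (ℤ, <, P₁, …, Pₙ)`. -/
def wordOf {n : ℕ} (P : Fin n → Set ℤ) : ℤ → (Fin n → Prop) :=
  fun i k => i ∈ P k

end Paper


section StmtAux
open Paper Paper.MSO
attribute [local instance] Classical.propDecidable

namespace StmtAux

variable {n : ℕ}

/-- Big conjunction of a list of formulas (empty list: a fixed true-ish sentinel). -/
def bigAnd : List (MSO n) → MSO n
  | [] => .not (.lt 0 0)
  | φ :: l => .and φ (bigAnd l)

def bigOr (l : List (MSO n)) : MSO n := .not (bigAnd (l.map .not))

def litOf (b : Bool) (φ : MSO n) : MSO n := cond b φ (.not φ)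

/-- Semantic `k`-types with `e` element parameters and `s` set parameters. -/
def Typ (n : ℕ) : ℕ → ℕ → ℕ → Type
  | 0, e, s => (Fin e → Fin e → Bool) × (Fin n → Fin e → Bool) × (Fin e → Fin s → Bool)
  | k+1, e, s => Typ n k e s × (Typ n k (e+1) s → Bool) × (Typ n k e (s+1) → Bool)

def typI : ∀ (k e s : ℕ), Fintype (Typ n k e s) × DecidableEq (Typ n k e s)
  | 0, e, s =>
      ⟨inferInstanceAs (Fintype ((Fin e → Fin e → Bool) × (Fin n → Fin e → Bool) × (Fin e → Fin s → Bool))),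
       inferInstanceAs (DecidableEq ((Fin e → Fin e → Bool) × (Fin n → Fin e → Bool) × (Fin e → Fin s → Bool)))⟩
  | k+1, e, s => by
      have i1 := typI k e s; have i2 := typI k (e+1) s; have i3 := typI k e (s+1)
      have := i1.1; have := i1.2; have := i2.1; have := i2.2; have := i3.1; have := i3.2
      exact ⟨inferInstanceAs (Fintype (Typ n k e s × (Typ n k (e+1) s → Bool) × (Typ n k e (s+1) → Bool))),
       inferInstanceAs (DecidableEq (Typ n k e s × (Typ n k (e+1) s → Bool) × (Typ n k e (s+1) → Bool)))⟩

noncomputable def listAll (k e s : ℕ) : List (Typ n k e s) :=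
  (@Finset.univ _ (typI k e s).1).toList

lemma mem_listAll {k e s : ℕ} (τ : Typ n k e s) : τ ∈ listAll (n := n) k e s :=
  Finset.mem_toList.mpr (@Finset.mem_univ _ (typI k e s).1 τ)

/-- The semantic `k`-type of a structure with parameters. -/
noncomputable def typeOf {A : Type} (r : A → A → Prop) (P : Fin n → Set A) :
    ∀ (k e s : ℕ), (Fin e → A) → (Fin s → Set A) → Typ n k e s
  | 0, _, _, as, Ss =>
      (fun i j => decide (r (as i) (as j)), fun m i => decide (as i ∈ P m),
       fun i j => decide ((as i) ∈ Ss j))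
  | k+1, e, s, as, Ss =>
      (typeOf r P k e s as Ss,
       fun τ => decide (∃ a : A, typeOf r P k (e+1) s (Fin.snoc as a) Ss = τ),
       fun τ => decide (∃ S : Set A, typeOf r P k e (s+1) as (Fin.snoc Ss S) = τ))

/-- The Hintikka formula of a type. -/
noncomputable def formOf : ∀ (k e s : ℕ), Typ n k e s → MSO n
  | 0, e, s, τ => bigAnd (
      ((List.finRange e).flatMap fun i => (List.finRange e).map fun j =>
        litOf (τ.1 i j) (.lt (i : ℕ) (j : ℕ))) ++
      ((List.finRange n).flatMap fun m => (List.finRange e).map fun i =>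
        litOf (τ.2.1 m i) (.pred m (i : ℕ))) ++
      ((List.finRange e).flatMap fun i => (List.finRange s).map fun j =>
        litOf (τ.2.2 i j) (.mem (i : ℕ) (j : ℕ))))
  | k+1, e, s, τ => .and (formOf k e s τ.1) (.and
      (.and (bigAnd (((listAll k (e+1) s).filter fun σ => τ.2.1 σ).map fun σ =>
              .ex1 e (formOf k (e+1) s σ)))
            (.not (.ex1 e (.not (bigOr (((listAll k (e+1) s).filter fun σ => τ.2.1 σ).map fun σ =>
              formOf k (e+1) s σ))))))
      (.and (bigAnd (((listAll k e (s+1)).filter fun σ => τ.2.2 σ).map fun σ =>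
              .ex2 s (formOf k e (s+1) σ)))
            (.not (.ex2 s (.not (bigOr (((listAll k e (s+1)).filter fun σ => τ.2.2 σ).map fun σ =>
              formOf k e (s+1) σ)))))))

section Lemmas1
variable {n : ℕ} {A : Type} (r : A → A → Prop) (P : Fin n → Set A)

lemma decide_eq_iff' {p : Prop} [Decidable p] {b : Bool} : (decide p = b) ↔ (p ↔ b = true) := by
  cases b <;> simp

lemma sat_litOf {v V} (b : Bool) (φ : MSO n) :
    MSO.Sat r P v V (litOf b φ) ↔ (MSO.Sat r P v V φ ↔ b = true) := by
  cases b <;> simp [litOf, MSO.Sat]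

lemma sat_bigAnd (hirr : ∀ a, ¬ r a a) {v V} :
    ∀ l : List (MSO n), MSO.Sat r P v V (bigAnd l) ↔ ∀ φ ∈ l, MSO.Sat r P v V φ
  | [] => by simp [bigAnd, MSO.Sat, hirr]
  | φ :: l => by
      simp [bigAnd, MSO.Sat, sat_bigAnd hirr l]

lemma sat_bigOr (hirr : ∀ a, ¬ r a a) {v V} (l : List (MSO n)) :
    MSO.Sat r P v V (bigOr l) ↔ ∃ φ ∈ l, MSO.Sat r P v V φ := by
  rw [bigOr, show MSO.Sat r P v V (MSO.not (bigAnd (l.map .not))) =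
    ¬ MSO.Sat r P v V (bigAnd (l.map .not)) from rfl, sat_bigAnd r P hirr]
  simp [MSO.Sat]

lemma fv1_litOf (b : Bool) (φ : MSO n) : MSO.fv1 (litOf b φ) = MSO.fv1 φ := by
  cases b <;> simp [litOf, MSO.fv1]

lemma fv2_litOf (b : Bool) (φ : MSO n) : MSO.fv2 (litOf b φ) = MSO.fv2 φ := by
  cases b <;> simp [litOf, MSO.fv2]

lemma fv1_bigAnd {T : Finset ℕ} (h0 : 0 ∈ T) :
    ∀ l : List (MSO n), (∀ φ ∈ l, MSO.fv1 φ ⊆ T) → MSO.fv1 (bigAnd l) ⊆ T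
  | [] => by
      intro _
      simp [bigAnd, MSO.fv1, Finset.insert_subset_iff, h0]
  | φ :: l => by
      intro h
      simp only [bigAnd, MSO.fv1, Finset.union_subset_iff]
      exact ⟨h φ (by simp), fv1_bigAnd h0 l fun ψ hψ => h ψ (by simp [hψ])⟩

lemma fv2_bigAnd {T : Finset ℕ} :
    ∀ l : List (MSO n), (∀ φ ∈ l, MSO.fv2 φ ⊆ T) → MSO.fv2 (bigAnd l) ⊆ T
  | [] => by intro _; simp [bigAnd, MSO.fv2]
  | φ :: l => by
      intro h
      simp only [bigAnd, MSO.fv2, Finset.union_subset_iff]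
      exact ⟨h φ (by simp), fv2_bigAnd l fun ψ hψ => h ψ (by simp [hψ])⟩

lemma fv1_bigOr {T : Finset ℕ} (h0 : 0 ∈ T) (l : List (MSO n))
    (h : ∀ φ ∈ l, MSO.fv1 φ ⊆ T) : MSO.fv1 (bigOr l) ⊆ T := by
  rw [bigOr, show MSO.fv1 (MSO.not (bigAnd (l.map .not))) = MSO.fv1 (bigAnd (l.map .not)) from rfl]
  refine fv1_bigAnd h0 _ ?_
  intro ψ hψ
  obtain ⟨φ, hφ, rfl⟩ := List.mem_map.mp hψ
  exact h φ hφ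

lemma fv2_bigOr {T : Finset ℕ} (l : List (MSO n))
    (h : ∀ φ ∈ l, MSO.fv2 φ ⊆ T) : MSO.fv2 (bigOr l) ⊆ T := by
  rw [bigOr, show MSO.fv2 (MSO.not (bigAnd (l.map .not))) = MSO.fv2 (bigAnd (l.map .not)) from rfl]
  refine fv2_bigAnd _ ?_
  intro ψ hψ
  obtain ⟨φ, hφ, rfl⟩ := List.mem_map.mp hψ
  exact h φ hφ

lemma snoc_val {β : Type*} {e : ℕ} (v : ℕ → β) (a : β) :
    (fun i : Fin (e+1) => Function.update v e a (i : ℕ)) =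
      Fin.snoc (fun i : Fin e => v (i : ℕ)) a := by
  funext i
  refine Fin.lastCases ?_ ?_ i
  · simp [Fin.snoc_last]
  · intro j
    have hj : (j : ℕ) ≠ e := by have := j.isLt; omega
    simp [Fin.snoc_castSucc, Fin.coe_castSucc, Function.update_of_ne hj]

/-- Coincidence lemma: satisfaction only depends on the free variables. -/
lemma sat_congr : ∀ (φ : MSO n) (v₁ v₂ : ℕ → A) (V₁ V₂ : ℕ → Set A),
    (∀ i ∈ MSO.fv1 φ, v₁ i = v₂ i) → (∀ j ∈ MSO.fv2 φ, V₁ j = V₂ j) →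
    (MSO.Sat r P v₁ V₁ φ ↔ MSO.Sat r P v₂ V₂ φ)
  | .lt i j, v₁, v₂, V₁, V₂, h1, _ => by
      simp only [MSO.Sat]
      rw [h1 i (by simp [MSO.fv1]), h1 j (by simp [MSO.fv1])]
  | .pred m i, v₁, v₂, V₁, V₂, h1, _ => by
      simp only [MSO.Sat]
      rw [h1 i (by simp [MSO.fv1])]
  | .mem i j, v₁, v₂, V₁, V₂, h1, h2 => by
      simp only [MSO.Sat]
      rw [h1 i (by simp [MSO.fv1]), h2 j (by simp [MSO.fv2])]
  | .not φ, v₁, v₂, V₁, V₂, h1, h2 => by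
      simp only [MSO.Sat]
      rw [sat_congr φ v₁ v₂ V₁ V₂ h1 h2]
  | .and φ ψ, v₁, v₂, V₁, V₂, h1, h2 => by
      simp only [MSO.Sat]
      rw [sat_congr φ v₁ v₂ V₁ V₂ (fun i hi => h1 i (by simp [MSO.fv1, hi]))
            (fun j hj => h2 j (by simp [MSO.fv2, hj])),
         sat_congr ψ v₁ v₂ V₁ V₂ (fun i hi => h1 i (by simp [MSO.fv1, hi]))
            (fun j hj => h2 j (by simp [MSO.fv2, hj]))]
  | .ex1 i φ, v₁, v₂, V₁, V₂, h1, h2 => by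
      simp only [MSO.Sat]
      refine exists_congr fun a => ?_
      refine sat_congr φ _ _ _ _ ?_ h2
      intro i' hi'
      rcases eq_or_ne i' i with rfl | hne
      · simp
      · rw [Function.update_of_ne hne, Function.update_of_ne hne]
        exact h1 i' (by simp [MSO.fv1, Finset.mem_sdiff, hi', hne])
  | .ex2 j φ, v₁, v₂, V₁, V₂, h1, h2 => by
      simp only [MSO.Sat]
      refine exists_congr fun S => ?_
      refine sat_congr φ _ _ _ _ h1 ?_
      intro j' hj'
      rcases eq_or_ne j' j with rfl | hne
      · simp
      · rw [Function.update_of_ne hne, Function.update_of_ne hne]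
        exact h2 j' (by simp [MSO.fv2, Finset.mem_sdiff, hj', hne])

lemma typeOf_succ_fst {k e s : ℕ} (as : Fin e → A) (Ss : Fin s → Set A) :
    (typeOf r P (k+1) e s as Ss).1 = typeOf r P k e s as Ss := rfl

lemma typeOf_le {e s : ℕ} {as₁ as₂ : Fin e → A} {Ss₁ Ss₂ : Fin s → Set A} :
    ∀ {k k' : ℕ}, k' ≤ k →
      typeOf r P k e s as₁ Ss₁ = typeOf r P k e s as₂ Ss₂ →
      typeOf r P k' e s as₁ Ss₁ = typeOf r P k' e s as₂ Ss₂ := by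
  intro k
  induction k with
  | zero =>
      intro k' hk' h
      have : k' = 0 := Nat.le_zero.mp hk'
      subst this; exact h
  | succ k ih =>
      intro k' hk' h
      rcases Nat.lt_or_ge k' (k+1) with hlt | hge
      · exact ih (by omega) (congrArg Prod.fst h)
      · have : k' = k+1 := by omega
        subst this; exact h

end Lemmas1

section Lemmas2
variable {n : ℕ}

lemma fv1_formOf : ∀ (k e s : ℕ) (τ : Typ n k e s),
    MSO.fv1 (formOf k e s τ) ⊆ Finset.range (max 1 e)
  | 0, e, s, τ => by
      rw [formOf]
      refine fv1_bigAnd (by simp) _ ?_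
      intro φ hφ
      simp only [List.mem_append, List.mem_flatMap, List.mem_map, List.mem_finRange] at hφ
      rcases hφ with (⟨i, _, j, _, rfl⟩ | ⟨m, _, i, _, rfl⟩) | ⟨i, _, j, _, rfl⟩ <;>
        rw [fv1_litOf] <;> simp [MSO.fv1, Finset.insert_subset_iff, Finset.mem_range] <;> omega
  | k+1, e, s, τ => by
      rw [formOf]
      simp only [MSO.fv1, Finset.union_subset_iff]
      have hex1 : ∀ σ : Typ n k (e+1) s,
          MSO.fv1 (MSO.ex1 e (formOf k (e+1) s σ)) ⊆ Finset.range (max 1 e) := by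
        intro σ
        show MSO.fv1 (formOf k (e+1) s σ) \ {e} ⊆ _
        intro x hx
        rw [Finset.mem_sdiff] at hx
        have h1 := fv1_formOf k (e+1) s σ hx.1
        simp only [Finset.mem_range] at *
        have : x ≠ e := by simpa using hx.2
        omega
      have hex2 : ∀ σ : Typ n k e (s+1),
          MSO.fv1 (formOf k e (s+1) σ) ⊆ Finset.range (max 1 e) := fun σ => fv1_formOf k e (s+1) σ
      refine ⟨fv1_formOf k e s τ.1, ⟨?_, ?_⟩, ?_, ?_⟩
      · refine fv1_bigAnd (by simp) _ ?_
        intro φ hφ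
        obtain ⟨σ, _, rfl⟩ := List.mem_map.mp hφ
        exact hex1 σ
      · show MSO.fv1 (MSO.ex1 e (MSO.not (bigOr _))) ⊆ _
        show MSO.fv1 (bigOr _) \ {e} ⊆ _
        intro x hx
        rw [Finset.mem_sdiff] at hx
        have h1 : MSO.fv1 (bigOr (((listAll k (e+1) s).filter fun σ => τ.2.1 σ).map fun σ =>
            formOf k (e+1) s σ)) ⊆ Finset.range (max 1 (e+1)) := by
          refine fv1_bigOr (by simp) _ ?_
          intro φ hφ
          obtain ⟨σ, _, rfl⟩ := List.mem_map.mp hφ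
          exact fv1_formOf k (e+1) s σ
        have := h1 hx.1
        have hne : x ≠ e := by simpa using hx.2
        simp only [Finset.mem_range] at *
        omega
      · refine fv1_bigAnd (by simp) _ ?_
        intro φ hφ
        obtain ⟨σ, _, rfl⟩ := List.mem_map.mp hφ
        exact hex2 σ
      · show MSO.fv1 (bigOr _) ⊆ _
        refine fv1_bigOr (by simp) _ ?_
        intro φ hφ
        obtain ⟨σ, _, rfl⟩ := List.mem_map.mp hφ
        exact hex2 σ

lemma fv2_formOf : ∀ (k e s : ℕ) (τ : Typ n k e s),
    MSO.fv2 (formOf k e s τ) ⊆ Finset.range s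
  | 0, e, s, τ => by
      rw [formOf]
      refine fv2_bigAnd _ ?_
      intro φ hφ
      simp only [List.mem_append, List.mem_flatMap, List.mem_map, List.mem_finRange] at hφ
      rcases hφ with (⟨i, _, j, _, rfl⟩ | ⟨m, _, i, _, rfl⟩) | ⟨i, _, j, _, rfl⟩ <;>
        rw [fv2_litOf] <;> simp [MSO.fv2, Finset.insert_subset_iff, Finset.mem_range]
  | k+1, e, s, τ => by
      rw [formOf]
      simp only [MSO.fv2, Finset.union_subset_iff]
      have hex2 : ∀ σ : Typ n k e (s+1),
          MSO.fv2 (formOf k e (s+1) σ) \ {s} ⊆ Finset.range s := by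
        intro σ x hx
        rw [Finset.mem_sdiff] at hx
        have h1 := fv2_formOf k e (s+1) σ hx.1
        have hne : x ≠ s := by simpa using hx.2
        simp only [Finset.mem_range] at *
        omega
      refine ⟨fv2_formOf k e s τ.1, ⟨?_, ?_⟩, ?_, ?_⟩
      · refine fv2_bigAnd _ ?_
        intro φ hφ
        obtain ⟨σ, _, rfl⟩ := List.mem_map.mp hφ
        exact fv2_formOf k (e+1) s σ
      · show MSO.fv2 (bigOr _) ⊆ _
        refine fv2_bigOr _ ?_
        intro φ hφ
        obtain ⟨σ, _, rfl⟩ := List.mem_map.mp hφ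
        exact fv2_formOf k (e+1) s σ
      · refine fv2_bigAnd _ ?_
        intro φ hφ
        obtain ⟨σ, _, rfl⟩ := List.mem_map.mp hφ
        exact hex2 σ
      · show MSO.fv2 (bigOr _) \ {s} ⊆ _
        intro x hx
        rw [Finset.mem_sdiff] at hx
        have h1 : MSO.fv2 (bigOr (((listAll k e (s+1)).filter fun σ => τ.2.2 σ).map fun σ =>
            formOf k e (s+1) σ)) ⊆ Finset.range (s+1) := by
          refine fv2_bigOr _ ?_
          intro φ hφ
          obtain ⟨σ, _, rfl⟩ := List.mem_map.mp hφ
          exact (fv2_formOf k e (s+1) σ).trans (by intro y; simp only [Finset.mem_range]; omega)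
        have := h1 hx.1
        have hne : x ≠ s := by simpa using hx.2
        simp only [Finset.mem_range] at *
        omega

end Lemmas2

section Lemmas3
variable {n : ℕ}

lemma sat_formOf {A : Type} (r : A → A → Prop) (P : Fin n → Set A) (hirr : ∀ a, ¬ r a a) :
    ∀ (k e s : ℕ) (τ : Typ n k e s) (v : ℕ → A) (V : ℕ → Set A),
      MSO.Sat r P v V (formOf k e s τ) ↔
        typeOf r P k e s (fun i : Fin e => v (i : ℕ)) (fun j : Fin s => V (j : ℕ)) = τ
  | 0, e, s, τ, v, V => by
      rw [formOf, sat_bigAnd r P hirr]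
      have hτ : typeOf r P 0 e s (fun i : Fin e => v (i : ℕ)) (fun j : Fin s => V (j : ℕ)) = τ ↔
          ((∀ i j : Fin e, (r (v (i : ℕ)) (v (j : ℕ)) ↔ τ.1 i j = true)) ∧
           (∀ (m : Fin n) (i : Fin e), (v (i : ℕ) ∈ P m ↔ τ.2.1 m i = true)) ∧
           (∀ (i : Fin e) (j : Fin s), (v (i : ℕ) ∈ V (j : ℕ) ↔ τ.2.2 i j = true))) := by
        rw [show typeOf r P 0 e s (fun i : Fin e => v (i : ℕ)) (fun j : Fin s => V (j : ℕ)) =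
          ((fun (i j : Fin e) => decide (r (v (i : ℕ)) (v (j : ℕ)))),
           (fun (m : Fin n) (i : Fin e) => decide (v (i : ℕ) ∈ P m)),
           (fun (i : Fin e) (j : Fin s) => decide (v (i : ℕ) ∈ V (j : ℕ)))) from rfl]
        erw [Prod.ext_iff, Prod.ext_iff]
        simp only [funext_iff, decide_eq_iff']
      rw [hτ]
      constructor
      · intro h
        refine ⟨fun i j => ?_, fun m i => ?_, fun i j => ?_⟩
        · have := h (litOf (τ.1 i j) (.lt (i : ℕ) (j : ℕ))) (by
            simp only [List.mem_append, List.mem_flatMap, List.mem_map, List.mem_finRange]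
            exact Or.inl (Or.inl ⟨i, trivial, j, trivial, rfl⟩))
          rw [sat_litOf] at this
          simpa [MSO.Sat] using this
        · have := h (litOf (τ.2.1 m i) (.pred m (i : ℕ))) (by
            simp only [List.mem_append, List.mem_flatMap, List.mem_map, List.mem_finRange]
            exact Or.inl (Or.inr ⟨m, trivial, i, trivial, rfl⟩))
          rw [sat_litOf] at this
          simpa [MSO.Sat] using this
        · have := h (litOf (τ.2.2 i j) (.mem (i : ℕ) (j : ℕ))) (by
            simp only [List.mem_append, List.mem_flatMap, List.mem_map, List.mem_finRange]
            exact Or.inr ⟨i, trivial, j, trivial, rfl⟩)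
          rw [sat_litOf] at this
          simpa [MSO.Sat] using this
      · rintro ⟨h1, h2, h3⟩ φ hφ
        simp only [List.mem_append, List.mem_flatMap, List.mem_map, List.mem_finRange] at hφ
        rcases hφ with (⟨i, -, j, -, rfl⟩ | ⟨m, -, i, -, rfl⟩) | ⟨i, -, j, -, rfl⟩ <;>
          rw [sat_litOf]
        · simpa [MSO.Sat] using h1 i j
        · simpa [MSO.Sat] using h2 m i
        · simpa [MSO.Sat] using h3 i j
  | k+1, e, s, τ, v, V => by
      have key1 : ∀ (a : A) (σ : Typ n k (e+1) s),
          MSO.Sat r P (Function.update v e a) V (formOf k (e+1) s σ) ↔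
            typeOf r P k (e+1) s (Fin.snoc (fun i : Fin e => v (i : ℕ)) a)
              (fun j : Fin s => V (j : ℕ)) = σ := by
        intro a σ
        rw [sat_formOf r P hirr k (e+1) s σ _ _, snoc_val]
      have key2 : ∀ (S : Set A) (σ : Typ n k e (s+1)),
          MSO.Sat r P v (Function.update V s S) (formOf k e (s+1) σ) ↔
            typeOf r P k e (s+1) (fun i : Fin e => v (i : ℕ))
              (Fin.snoc (fun j : Fin s => V (j : ℕ)) S) = σ := by
        intro S σ
        rw [sat_formOf r P hirr k e (s+1) σ _ _, snoc_val]
      have filterm1 : ∀ σ : Typ n k (e+1) s,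
          σ ∈ (listAll k (e+1) s).filter (fun σ => τ.2.1 σ) ↔ τ.2.1 σ = true := by
        intro σ; rw [List.mem_filter]; simp [mem_listAll]
      have filterm2 : ∀ σ : Typ n k e (s+1),
          σ ∈ (listAll k e (s+1)).filter (fun σ => τ.2.2 σ) ↔ τ.2.2 σ = true := by
        intro σ; rw [List.mem_filter]; simp [mem_listAll]
      have hB1 : MSO.Sat r P v V (bigAnd (((listAll k (e+1) s).filter fun σ => τ.2.1 σ).map
            fun σ => MSO.ex1 e (formOf k (e+1) s σ))) ↔
          ∀ σ ∈ (listAll k (e+1) s).filter (fun σ => τ.2.1 σ),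
            ∃ a : A, typeOf r P k (e+1) s (Fin.snoc (fun i : Fin e => v (i : ℕ)) a)
              (fun j : Fin s => V (j : ℕ)) = σ := by
        rw [sat_bigAnd r P hirr, List.forall_mem_map]
        refine forall₂_congr fun σ _ => ?_
        show (∃ a : A, MSO.Sat r P (Function.update v e a) V (formOf k (e+1) s σ)) ↔ _
        exact exists_congr fun a => key1 a σ
      have hB2 : (¬ ∃ a : A, ¬ MSO.Sat r P (Function.update v e a) V
            (bigOr (((listAll k (e+1) s).filter fun σ => τ.2.1 σ).map
              fun σ => formOf k (e+1) s σ))) ↔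
          ∀ a : A, ∃ σ ∈ (listAll k (e+1) s).filter (fun σ => τ.2.1 σ),
            typeOf r P k (e+1) s (Fin.snoc (fun i : Fin e => v (i : ℕ)) a)
              (fun j : Fin s => V (j : ℕ)) = σ := by
        simp only [not_exists, not_not]
        refine forall_congr' fun a => ?_
        rw [sat_bigOr r P hirr]
        constructor
        · rintro ⟨φ, hφ, hsat⟩
          obtain ⟨σ, hσ, rfl⟩ := List.mem_map.mp hφ
          exact ⟨σ, hσ, (key1 a σ).mp hsat⟩
        · rintro ⟨σ, hσ, h⟩
          exact ⟨_, List.mem_map_of_mem hσ, (key1 a σ).mpr h⟩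
      have hC1 : MSO.Sat r P v V (bigAnd (((listAll k e (s+1)).filter fun σ => τ.2.2 σ).map
            fun σ => MSO.ex2 s (formOf k e (s+1) σ))) ↔
          ∀ σ ∈ (listAll k e (s+1)).filter (fun σ => τ.2.2 σ),
            ∃ S : Set A, typeOf r P k e (s+1) (fun i : Fin e => v (i : ℕ))
              (Fin.snoc (fun j : Fin s => V (j : ℕ)) S) = σ := by
        rw [sat_bigAnd r P hirr, List.forall_mem_map]
        refine forall₂_congr fun σ _ => ?_
        show (∃ S : Set A, MSO.Sat r P v (Function.update V s S) (formOf k e (s+1) σ)) ↔ _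
        exact exists_congr fun S => key2 S σ
      have hC2 : (¬ ∃ S : Set A, ¬ MSO.Sat r P v (Function.update V s S)
            (bigOr (((listAll k e (s+1)).filter fun σ => τ.2.2 σ).map
              fun σ => formOf k e (s+1) σ))) ↔
          ∀ S : Set A, ∃ σ ∈ (listAll k e (s+1)).filter (fun σ => τ.2.2 σ),
            typeOf r P k e (s+1) (fun i : Fin e => v (i : ℕ))
              (Fin.snoc (fun j : Fin s => V (j : ℕ)) S) = σ := by
        simp only [not_exists, not_not]
        refine forall_congr' fun S => ?_
        rw [sat_bigOr r P hirr]
        constructor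
        · rintro ⟨φ, hφ, hsat⟩
          obtain ⟨σ, hσ, rfl⟩ := List.mem_map.mp hφ
          exact ⟨σ, hσ, (key2 S σ).mp hsat⟩
        · rintro ⟨σ, hσ, h⟩
          exact ⟨_, List.mem_map_of_mem hσ, (key2 S σ).mpr h⟩
      rw [formOf]
      simp only [MSO.Sat]
      rw [show typeOf r P (k+1) e s (fun i : Fin e => v (i : ℕ)) (fun j : Fin s => V (j : ℕ)) =
        (typeOf r P k e s (fun i : Fin e => v (i : ℕ)) (fun j : Fin s => V (j : ℕ)),
         fun σ => decide (∃ a : A, typeOf r P k (e+1) s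
            (Fin.snoc (fun i : Fin e => v (i : ℕ)) a) (fun j : Fin s => V (j : ℕ)) = σ),
         fun σ => decide (∃ S : Set A, typeOf r P k e (s+1)
            (fun i : Fin e => v (i : ℕ)) (Fin.snoc (fun j : Fin s => V (j : ℕ)) S) = σ))
        from rfl]
      erw [Prod.ext_iff, Prod.ext_iff]
      simp only [funext_iff, decide_eq_iff']
      refine and_congr (sat_formOf r P hirr k e s τ.1 v V) (and_congr
        (((and_congr hB1 hB2).trans ?_)) (((and_congr hC1 hC2).trans ?_)))
      · constructor
        · rintro ⟨h1, h2⟩ σ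
          constructor
          · rintro ⟨a, ha⟩
            obtain ⟨σ', hσ', ha'⟩ := h2 a
            have : σ' = σ := ha'.symm.trans ha
            exact (filterm1 σ).mp (this ▸ hσ')
          · intro hb
            exact h1 σ ((filterm1 σ).mpr hb)
        · intro h
          refine ⟨fun σ hσ => (h σ).mpr ((filterm1 σ).mp hσ), fun a => ?_⟩
          exact ⟨_, (filterm1 _).mpr ((h _).mp ⟨a, rfl⟩), rfl⟩
      · constructor
        · rintro ⟨h1, h2⟩ σ
          constructor
          · rintro ⟨S, hS⟩
            obtain ⟨σ', hσ', hS'⟩ := h2 S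
            have : σ' = σ := hS'.symm.trans hS
            exact (filterm2 σ).mp (this ▸ hσ')
          · intro hb
            exact h1 σ ((filterm2 σ).mpr hb)
        · intro h
          refine ⟨fun σ hσ => (h σ).mpr ((filterm2 σ).mp hσ), fun S => ?_⟩
          exact ⟨_, (filterm2 _).mpr ((h _).mp ⟨S, rfl⟩), rfl⟩

end Lemmas3

section Lemmas4
variable {n : ℕ}

/-- Composition: satisfaction in `M` transfers along assignments that agree outside `I`
and whose parts inside `I` have equal semantic types in `M_I`. -/
lemma CD {A : Type} [LinearOrder A] (P : Fin n → Set A) {I : Set A} (hI : I.OrdConnected) :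
    ∀ (φ : MSO n) (k e s : ℕ), MSO.qd φ ≤ k →
    ∀ (as₁ as₂ : Fin e → ↥I) (Ss₁ Ss₂ : Fin s → Set ↥I),
      typeOf (subRel (· < ·) I) (subPred P I) k e s as₁ Ss₁ =
        typeOf (subRel (· < ·) I) (subPred P I) k e s as₂ Ss₂ →
    ∀ (v₁ v₂ : ℕ → A) (V₁ V₂ : ℕ → Set A),
      (∀ i, (∃ p : Fin e, v₁ i = ↑(as₁ p) ∧ v₂ i = ↑(as₂ p)) ∨ (v₁ i = v₂ i ∧ v₁ i ∉ I)) →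
      (∀ j, (∃ q : Fin s, ∃ U : Set A, (∀ x ∈ U, x ∉ I) ∧
              V₁ j = Subtype.val '' Ss₁ q ∪ U ∧ V₂ j = Subtype.val '' Ss₂ q ∪ U) ∨
            (V₁ j = V₂ j ∧ ∀ x ∈ V₁ j, x ∉ I)) →
      MSO.Sat (· < ·) P v₁ V₁ φ → MSO.Sat (· < ·) P v₂ V₂ φ
  | .lt i j, k, e, s, _, as₁, as₂, Ss₁, Ss₂, ht, v₁, v₂, V₁, V₂, hv, hV, hsat => by
      have h0 := typeOf_le (subRel (· < ·) I) (subPred P I) (Nat.zero_le k) ht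
      have hlt : ∀ p p' : Fin e, ((as₁ p : A) < (as₁ p' : A)) ↔ ((as₂ p : A) < (as₂ p' : A)) := by
        intro p p'
        have := congrFun (congrFun (congrArg Prod.fst h0) p) p'
        exact decide_eq_decide.mp this
      have horder : ∀ (p : Fin e) (c : A), c ∉ I → (((as₁ p : A) < c) ↔ ((as₂ p : A) < c)) := by
        intro p c hc
        constructor
        · intro h
          by_contra hcon
          push_neg at hcon
          have hne : c ≠ (as₂ p : A) := fun h' => hc (h' ▸ (as₂ p).2)
          exact hc (hI.out (as₁ p).2 (as₂ p).2 ⟨h.le, hcon⟩)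
        · intro h
          by_contra hcon
          push_neg at hcon
          exact hc (hI.out (as₂ p).2 (as₁ p).2 ⟨h.le, hcon⟩)
      have horder' : ∀ (p : Fin e) (c : A), c ∉ I → ((c < (as₁ p : A)) ↔ (c < (as₂ p : A))) := by
        intro p c hc
        constructor
        · intro h
          by_contra hcon
          push_neg at hcon
          exact hc (hI.out (as₂ p).2 (as₁ p).2 ⟨hcon, h.le⟩)
        · intro h
          by_contra hcon
          push_neg at hcon
          exact hc (hI.out (as₁ p).2 (as₂ p).2 ⟨hcon, h.le⟩)
      show v₂ i < v₂ j
      have hs : v₁ i < v₁ j := hsat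
      rcases hv i with ⟨p, hp1, hp2⟩ | ⟨he, hni⟩ <;> rcases hv j with ⟨p', hq1, hq2⟩ | ⟨he', hni'⟩
      · rw [hp1, hq1] at hs; rw [hp2, hq2]; exact (hlt p p').mp hs
      · rw [hp1] at hs; rw [hp2, ← he']; exact (horder p (v₁ j) hni').mp hs
      · rw [hq1] at hs; rw [hq2, ← he]; exact (horder' p' (v₁ i) hni).mp hs
      · rw [← he, ← he']; exact hs
  | .pred m i, k, e, s, _, as₁, as₂, Ss₁, Ss₂, ht, v₁, v₂, V₁, V₂, hv, hV, hsat => by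
      have h0 := typeOf_le (subRel (· < ·) I) (subPred P I) (Nat.zero_le k) ht
      show v₂ i ∈ P m
      have hs : v₁ i ∈ P m := hsat
      rcases hv i with ⟨p, hp1, hp2⟩ | ⟨he, _⟩
      · have := congrFun (congrFun (congrArg (fun t => t.2.1) h0) m) p
        have hiff : ((as₁ p : A) ∈ P m) ↔ ((as₂ p : A) ∈ P m) := decide_eq_decide.mp this
        rw [hp2]; rw [hp1] at hs; exact hiff.mp hs
      · rw [← he]; exact hs
  | .mem i j, k, e, s, _, as₁, as₂, Ss₁, Ss₂, ht, v₁, v₂, V₁, V₂, hv, hV, hsat => by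
      have h0 := typeOf_le (subRel (· < ·) I) (subPred P I) (Nat.zero_le k) ht
      show v₂ i ∈ V₂ j
      have hs : v₁ i ∈ V₁ j := hsat
      rcases hv i with ⟨p, hp1, hp2⟩ | ⟨he, hni⟩
      · rcases hV j with ⟨q, U, hU, hV1, hV2⟩ | ⟨he', hni'⟩
        · have := congrFun (congrFun (congrArg (fun t => t.2.2) h0) p) q
          have hiff : (as₁ p ∈ Ss₁ q) ↔ (as₂ p ∈ Ss₂ q) := decide_eq_decide.mp this
          rw [hp1, hV1] at hs
          rw [hp2, hV2]
          rcases hs with hs | hs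
          · have : as₁ p ∈ Ss₁ q := by
              obtain ⟨x, hx, hxe⟩ := hs
              rwa [← Subtype.val_injective hxe]
            exact Or.inl ⟨as₂ p, hiff.mp this, rfl⟩
          · exact absurd (as₁ p).2 (hU _ hs)
        · rw [hp1] at hs
          exact absurd (as₁ p).2 (hni' _ hs)
      · rcases hV j with ⟨q, U, hU, hV1, hV2⟩ | ⟨he', _⟩
        · rw [← he, hV2]
          rw [hV1] at hs
          rcases hs with hs | hs
          · obtain ⟨x, _, hxe⟩ := hs
            exact absurd (hxe ▸ x.2) hni
          · exact Or.inr hs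
        · rw [← he, ← he']; exact hs
  | .not φ, k, e, s, hqd, as₁, as₂, Ss₁, Ss₂, ht, v₁, v₂, V₁, V₂, hv, hV, hsat => by
      intro h2
      refine hsat (CD P hI φ k e s hqd as₂ as₁ Ss₂ Ss₁ ht.symm v₂ v₁ V₂ V₁ ?_ ?_ h2)
      · intro i
        rcases hv i with ⟨p, h1, h2'⟩ | ⟨h1, h2'⟩
        · exact Or.inl ⟨p, h2', h1⟩
        · exact Or.inr ⟨h1.symm, h1 ▸ h2'⟩
      · intro j
        rcases hV j with ⟨q, U, hU, hV1, hV2⟩ | ⟨h1, h2'⟩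
        · exact Or.inl ⟨q, U, hU, hV2, hV1⟩
        · exact Or.inr ⟨h1.symm, h1 ▸ h2'⟩
  | .and φ ψ, k, e, s, hqd, as₁, as₂, Ss₁, Ss₂, ht, v₁, v₂, V₁, V₂, hv, hV, hsat => by
      have hqd' := max_le_iff.mp (show max (MSO.qd φ) (MSO.qd ψ) ≤ k from hqd)
      exact ⟨CD P hI φ k e s hqd'.1 as₁ as₂ Ss₁ Ss₂ ht v₁ v₂ V₁ V₂ hv hV hsat.1,
             CD P hI ψ k e s hqd'.2 as₁ as₂ Ss₁ Ss₂ ht v₁ v₂ V₁ V₂ hv hV hsat.2⟩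
  | .ex1 i φ, k, e, s, hqd, as₁, as₂, Ss₁, Ss₂, ht, v₁, v₂, V₁, V₂, hv, hV, hsat => by
      obtain ⟨a, ha⟩ := hsat
      have hk : MSO.qd φ + 1 ≤ k := hqd
      obtain ⟨k', rfl⟩ : ∃ k', k = k' + 1 := ⟨k - 1, by omega⟩
      have ht' := typeOf_le (subRel (· < ·) I) (subPred P I) (Nat.le_succ k') ht
      by_cases haI : a ∈ I
      · set x : ↥I := ⟨a, haI⟩ with hx
        have hE := congrArg (fun t : Typ n k' e s × (Typ n k' (e+1) s → Bool) ×
            (Typ n k' e (s+1) → Bool) => t.2.1) ht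
        have := congrFun hE (typeOf (subRel (· < ·) I) (subPred P I) k' (e+1) s
            (Fin.snoc as₁ x) Ss₁)
        have hex := decide_eq_decide.mp this
        obtain ⟨x₂, hx₂⟩ := hex.mp ⟨x, rfl⟩
        refine ⟨↑x₂, CD P hI φ k' (e+1) s (by omega) (Fin.snoc as₁ x) (Fin.snoc as₂ x₂)
          Ss₁ Ss₂ hx₂.symm _ _ V₁ V₂ ?_ hV ha⟩
        intro i'
        rcases eq_or_ne i' i with rfl | hne
        · exact Or.inl ⟨Fin.last e, by simp [Fin.snoc_last, hx], by simp [Fin.snoc_last]⟩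
        · rw [Function.update_of_ne hne, Function.update_of_ne hne]
          rcases hv i' with ⟨p, h1, h2⟩ | h
          · exact Or.inl ⟨p.castSucc, by simp [Fin.snoc_castSucc, h1], by simp [Fin.snoc_castSucc, h2]⟩
          · exact Or.inr h
      · refine ⟨a, CD P hI φ k' e s (by omega) as₁ as₂ Ss₁ Ss₂
          (typeOf_le _ _ (Nat.le_succ k') ht) _ _ V₁ V₂ ?_ hV ha⟩
        intro i'
        rcases eq_or_ne i' i with rfl | hne
        · exact Or.inr ⟨by simp, by simp [haI]⟩
        · rw [Function.update_of_ne hne, Function.update_of_ne hne]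
          exact hv i'
  | .ex2 j φ, k, e, s, hqd, as₁, as₂, Ss₁, Ss₂, ht, v₁, v₂, V₁, V₂, hv, hV, hsat => by
      obtain ⟨S, hS⟩ := hsat
      have hk : MSO.qd φ + 1 ≤ k := hqd
      obtain ⟨k', rfl⟩ : ∃ k', k = k' + 1 := ⟨k - 1, by omega⟩
      set T₁ : Set ↥I := {x : ↥I | (x : A) ∈ S} with hT₁
      have hE := congrArg (fun t : Typ n k' e s × (Typ n k' (e+1) s → Bool) ×
          (Typ n k' e (s+1) → Bool) => t.2.2) ht
      have := congrFun hE (typeOf (subRel (· < ·) I) (subPred P I) k' e (s+1)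
          as₁ (Fin.snoc Ss₁ T₁))
      have hex := decide_eq_decide.mp this
      obtain ⟨T₂, hT₂⟩ := hex.mp ⟨T₁, rfl⟩
      refine ⟨Subtype.val '' T₂ ∪ (S \ I), CD P hI φ k' e (s+1) (by omega) as₁ as₂
        (Fin.snoc Ss₁ T₁) (Fin.snoc Ss₂ T₂) hT₂.symm v₁ v₂ _ _ hv ?_ hS⟩
      intro j'
      rcases eq_or_ne j' j with rfl | hne
      · refine Or.inl ⟨Fin.last s, S \ I, fun x hx => hx.2, ?_, ?_⟩
        · rw [Function.update_self, Fin.snoc_last]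
          ext x
          constructor
          · intro hx
            by_cases hxI : x ∈ I
            · exact Or.inl ⟨⟨x, hxI⟩, hx, rfl⟩
            · exact Or.inr ⟨hx, hxI⟩
          · rintro (⟨y, hy, rfl⟩ | hx)
            · exact hy
            · exact hx.1
        · rw [Function.update_self, Fin.snoc_last]
      · rw [Function.update_of_ne hne, Function.update_of_ne hne]
        rcases hV j' with ⟨q, U, hU, h1, h2⟩ | h
        · exact Or.inl ⟨q.castSucc, U, hU, by simp [Fin.snoc_castSucc, h1], by simp [Fin.snoc_castSucc, h2]⟩
        · exact Or.inr h

end Lemmas4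

section Assemble
variable {n : ℕ}

noncomputable def tIdef {A : Type} [LinearOrder A] (P : Fin n → Set A) (I : Set A) (k : ℕ)
    (b : ↥I) : Typ n k 1 0 :=
  typeOf (subRel (fun x y : A => x < y) I) (subPred P I) k 1 0
    (fun _ : Fin 1 => b) (fun j : Fin 0 => j.elim0)

noncomputable def psiDef {A : Type} [LinearOrder A] (P : Fin n → Set A) (I : Set A)
    (Q : Set A) (k : ℕ) : MSO n :=
  bigOr (((listAll k 1 0).filter fun τ =>
    decide (∃ b : ↥I, (b : A) ∈ Q ∧ tIdef P I k b = τ)).map (formOf k 1 0))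

lemma fv1_psiDef {A : Type} [LinearOrder A] (P : Fin n → Set A) (I : Set A)
    (Q : Set A) (k : ℕ) : MSO.fv1 (psiDef P I Q k) ⊆ {0} := by
  refine fv1_bigOr (by simp) _ ?_
  intro χ hχ
  obtain ⟨τ, _, rfl⟩ := List.mem_map.mp hχ
  have := fv1_formOf k 1 0 τ
  simpa [Finset.range_one] using this

lemma fv2_psiDef {A : Type} [LinearOrder A] (P : Fin n → Set A) (I : Set A)
    (Q : Set A) (k : ℕ) : MSO.fv2 (psiDef P I Q k) = ∅ := by
  refine Finset.subset_empty.mp (fv2_bigOr _ ?_)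
  intro χ hχ
  obtain ⟨τ, _, rfl⟩ := List.mem_map.mp hχ
  simpa [Finset.range_zero] using fv2_formOf k 1 0 τ

lemma sat_psiDef {A : Type} [LinearOrder A] (P : Fin n → Set A) (I : Set A)
    (Q : Set A) (k : ℕ) (v : ℕ → ↥I) (V : ℕ → Set ↥I) (b : ↥I) :
    MSO.Sat (subRel (fun x y : A => x < y) I) (subPred P I)
        (Function.update v 0 b) V (psiDef P I Q k) ↔
      ∃ b₀ : ↥I, (b₀ : A) ∈ Q ∧ tIdef P I k b₀ = tIdef P I k b := by
  have hirr : ∀ x : ↥I, ¬ subRel (fun x y : A => x < y) I x x := fun x => lt_irrefl (x : A)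
  rw [psiDef, sat_bigOr _ _ hirr]
  have harg : (fun i : Fin 1 => Function.update v 0 b (i : ℕ)) = (fun _ : Fin 1 => b) := by
    funext i
    have h0 : (i : ℕ) = 0 := by omega
    rw [h0]; simp
  have harg2 : (fun j : Fin 0 => V (j : ℕ)) = (fun j : Fin 0 => j.elim0) := by
    funext j; exact j.elim0
  constructor
  · rintro ⟨χ, hχ, hsatχ⟩
    obtain ⟨τ, hτ, rfl⟩ := List.mem_map.mp hχ
    rw [sat_formOf _ _ hirr k 1 0 τ _ _, harg, harg2] at hsatχ
    rw [List.mem_filter] at hτ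
    have := of_decide_eq_true hτ.2
    obtain ⟨b₀, hb₀, ht⟩ := this
    exact ⟨b₀, hb₀, ht.trans hsatχ.symm⟩
  · rintro ⟨b₀, hb₀, ht⟩
    refine ⟨formOf k 1 0 (tIdef P I k b), List.mem_map_of_mem ?_, ?_⟩
    · rw [List.mem_filter]
      exact ⟨mem_listAll _, decide_eq_true ⟨b₀, hb₀, ht⟩⟩
    · rw [sat_formOf _ _ hirr k 1 0 _ _ _, harg, harg2]
      rfl

end Assemble

end StmtAux

open Paper

/-- If `I` is an interval of the labelled linear ordering `M = (A, <, P₁, …, Pₙ)`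
and `Q ⊆ A` is MSO-definable in `M`, then `Q ∩ I` is MSO-definable in the
substructure `M_I`. -/
theorem stmt_6 {A : Type} [LinearOrder A] {n : ℕ} (P : Fin n → Set A)
    (I : Set A) (hI : I.OrdConnected) (Q : Set A)
    (hQ : MSO.Definable (fun x y : A => x < y) P Q) :
    MSO.Definable (subRel (fun x y : A => x < y) I) (subPred P I)
      {x : I | (x : A) ∈ Q} := by
  classical
  obtain ⟨φ, hfv1, hfv2, hsat⟩ := hQ
  refine ⟨StmtAux.psiDef P I Q (MSO.qd φ), StmtAux.fv1_psiDef P I Q _,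
    StmtAux.fv2_psiDef P I Q _, ?_⟩
  intro b
  have hQiff : ∀ c : ↥I, (c : A) ∈ Q ↔ MSO.Sat (fun x y : A => x < y) P
      (fun _ => (c : A)) (fun _ => (∅ : Set A)) φ := by
    intro c
    rw [hsat (c : A)]
    constructor
    · intro h'
      have hone := h' (fun _ => (c : A)) (fun _ => (∅ : Set A))
      refine (StmtAux.sat_congr _ _ φ _ _ _ _ ?_ ?_).mp hone
      · intro i hi
        have : i = 0 := Finset.mem_singleton.mp (hfv1 hi)
        subst this; simp
      · exact fun j hj => absurd (hfv2 ▸ hj) (Finset.notMem_empty j)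
    · intro h' v V
      refine (StmtAux.sat_congr _ _ φ _ _ _ _ ?_ ?_).mp h'
      · intro i hi
        have : i = 0 := Finset.mem_singleton.mp (hfv1 hi)
        subst this; simp
      · exact fun j hj => absurd (hfv2 ▸ hj) (Finset.notMem_empty j)
  show (b : A) ∈ Q ↔ _
  constructor
  · intro hbQ v V
    rw [StmtAux.sat_psiDef]
    exact ⟨b, hbQ, rfl⟩
  · intro h
    have h2 := (StmtAux.sat_psiDef P I Q (MSO.qd φ) (fun _ => b) (fun _ => ∅) b).mp
      (h (fun _ => b) (fun _ => ∅))
    obtain ⟨b₀, hb₀Q, htype⟩ := h2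
    have hCD := StmtAux.CD P hI φ (MSO.qd φ) 1 0 le_rfl (fun _ => b₀) (fun _ => b)
      (fun j => j.elim0) (fun j => j.elim0) htype
      (fun _ => (b₀ : A)) (fun _ => (b : A)) (fun _ => (∅ : Set A)) (fun _ => (∅ : Set A))
      (fun i => Or.inl ⟨0, rfl, rfl⟩)
      (fun j => Or.inr ⟨rfl, by simp⟩)
    exact (hQiff b).mpr (hCD ((hQiff b₀).mp hb₀Q))
end StmtAux
end

section
/- Let M = (ℕ, <, P₁, …, Pₙ) be a labelled linear ordering over the natural numbers and let H ⊆ ℕ be uniformly homogeneous for M. Then H is not MSO-definable in M. -/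
namespace Paper

set_option linter.dupNamespace false

namespace MSO

section EF

variable {n : ℕ}

/-- Atomic diagram data of an assignment (first `p` element slots, first `q` set slots). -/
def T0 (n p q : ℕ) : Type :=
  (Fin p → Fin p → Prop) × (Fin p → Fin n → Prop) × (Fin p → Fin q → Prop)

instance T0.finite (n p q : ℕ) : Finite (T0 n p q) := by
  unfold T0; infer_instance

/-- Hintikka-type objects of depth `k` with `p` element slots and `q` set slots. -/
def Ty (n : ℕ) : ℕ → ℕ → ℕ → Type
  | 0, p, q => T0 n p q
  | k+1, p, q => T0 n p q × Finset (Ty n k (p+1) q) × Finset (Ty n k p (q+1))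

instance Ty.finite : ∀ (k p q : ℕ), Finite (Ty n k p q)
  | 0, _, _ => by unfold Ty; infer_instance
  | k+1, p, q => by
    unfold Ty
    haveI := Ty.finite k (p+1) q
    haveI := Ty.finite k p (q+1)
    haveI := Fintype.ofFinite (Ty n k (p+1) q)
    haveI := Fintype.ofFinite (Ty n k p (q+1))
    infer_instance

/-- The atomic diagram of an assignment. -/
def diag {A : Type} (r : A → A → Prop) (P : Fin n → Set A) (p q : ℕ)
    (v : ℕ → A) (V : ℕ → Set A) : T0 n p q :=
  ⟨fun i j => r (v i) (v j), fun i c => v i ∈ P c, fun i j => v i ∈ V j⟩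

/-- The depth-`k` type of an assignment. -/
noncomputable def typeof {A : Type} (r : A → A → Prop) (P : Fin n → Set A) :
    (k p q : ℕ) → (v : ℕ → A) → (V : ℕ → Set A) → Ty n k p q
  | 0, p, q, v, V => diag r P p q v V
  | k+1, p, q, v, V =>
    ⟨diag r P p q v V,
      (Set.toFinite (Set.range fun a : A =>
        typeof r P k (p+1) q (Function.update v p a) V)).toFinset,
      (Set.toFinite (Set.range fun S : Set A =>
        typeof r P k p (q+1) v (Function.update V q S))).toFinset⟩

variable {A B : Type} {r : A → A → Prop} {P : Fin n → Set A}
  {s : B → B → Prop} {Q : Fin n → Set B}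

lemma diag_congr {p q : ℕ} {v v' : ℕ → A} {V V' : ℕ → Set A}
    (h1 : ∀ i < p, v i = v' i) (h2 : ∀ j < q, V j = V' j) :
    diag r P p q v V = diag r P p q v' V' := by
  unfold diag
  refine Prod.ext ?_ (Prod.ext ?_ ?_)
  · funext i j; dsimp only; rw [h1 i i.2, h1 j j.2]
  · funext i c; dsimp only; rw [h1 i i.2]
  · funext i j; dsimp only; rw [h1 i i.2, h2 j j.2]

lemma typeof_congr :
    ∀ (k p q : ℕ) (v v' : ℕ → A) (V V' : ℕ → Set A),
      (∀ i < p, v i = v' i) → (∀ j < q, V j = V' j) →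
      typeof r P k p q v V = typeof r P k p q v' V'
  | 0, p, q, v, v', V, V', h1, h2 => diag_congr h1 h2
  | k+1, p, q, v, v', V, V', h1, h2 => by
    show (⟨_, _, _⟩ : Ty n (k+1) p q) = ⟨_, _, _⟩
    refine Prod.ext (diag_congr h1 h2) (Prod.ext ?_ ?_) <;> rw [Set.Finite.toFinset_inj]
    · have : (fun a : A => typeof r P k (p+1) q (Function.update v p a) V)
        = fun a : A => typeof r P k (p+1) q (Function.update v' p a) V' := by
        funext a
        refine typeof_congr k (p+1) q _ _ _ _ (fun i hi => ?_) h2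
        rcases Nat.lt_succ_iff_lt_or_eq.mp hi with hi | rfl
        · rw [Function.update_of_ne (Nat.ne_of_lt hi), Function.update_of_ne (Nat.ne_of_lt hi)]
          exact h1 i hi
        · simp
      rw [this]
    · have : (fun S : Set A => typeof r P k p (q+1) v (Function.update V q S))
        = fun S : Set A => typeof r P k p (q+1) v' (Function.update V' q S) := by
        funext S
        refine typeof_congr k p (q+1) _ _ _ _ h1 (fun j hj => ?_)
        rcases Nat.lt_succ_iff_lt_or_eq.mp hj with hj | rfl
        · rw [Function.update_of_ne (Nat.ne_of_lt hj), Function.update_of_ne (Nat.ne_of_lt hj)]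
          exact h2 j hj
        · simp
      rw [this]

lemma typeof_diag {k p q : ℕ} {v : ℕ → A} {V : ℕ → Set A} {w : ℕ → B} {W : ℕ → Set B}
    (h : typeof r P k p q v V = typeof s Q k p q w W) :
    diag r P p q v V = diag s Q p q w W := by
  cases k with
  | zero => exact h
  | succ k => exact congrArg Prod.fst h

lemma diag_rel {p q : ℕ} {v : ℕ → A} {V : ℕ → Set A} {w : ℕ → B} {W : ℕ → Set B}
    (h : diag r P p q v V = diag s Q p q w W) (i j : Fin p) :
    r (v i) (v j) ↔ s (w i) (w j) :=
  eq_iff_iff.mp (congrFun (congrFun (congrArg Prod.fst h) i) j)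

lemma diag_pred {p q : ℕ} {v : ℕ → A} {V : ℕ → Set A} {w : ℕ → B} {W : ℕ → Set B}
    (h : diag r P p q v V = diag s Q p q w W) (i : Fin p) (c : Fin n) :
    v i ∈ P c ↔ w i ∈ Q c :=
  eq_iff_iff.mp (congrFun (congrFun (congrArg (fun t => t.2.1) h) i) c)

lemma diag_mem {p q : ℕ} {v : ℕ → A} {V : ℕ → Set A} {w : ℕ → B} {W : ℕ → Set B}
    (h : diag r P p q v V = diag s Q p q w W) (i : Fin p) (j : Fin q) :
    v i ∈ V j ↔ w i ∈ W j :=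
  eq_iff_iff.mp (congrFun (congrFun (congrArg (fun t => t.2.2) h) i) j)

lemma reach_elem {k p q : ℕ} {v : ℕ → A} {V : ℕ → Set A} {w : ℕ → B} {W : ℕ → Set B}
    (h : typeof r P (k+1) p q v V = typeof s Q (k+1) p q w W) (a : A) :
    ∃ b : B, typeof r P k (p+1) q (Function.update v p a) V
      = typeof s Q k (p+1) q (Function.update w p b) W := by
  have h2 := congrArg (fun t : Ty n (k+1) p q => t.2.1) h
  simp only [typeof] at h2
  have hmem : typeof r P k (p+1) q (Function.update v p a) V ∈
      (Set.toFinite (Set.range fun a : A =>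
        typeof r P k (p+1) q (Function.update v p a) V)).toFinset := by
    rw [Set.Finite.mem_toFinset]; exact ⟨a, rfl⟩
  rw [h2, Set.Finite.mem_toFinset] at hmem
  obtain ⟨b, hb⟩ := hmem
  exact ⟨b, hb.symm⟩

lemma reach_set {k p q : ℕ} {v : ℕ → A} {V : ℕ → Set A} {w : ℕ → B} {W : ℕ → Set B}
    (h : typeof r P (k+1) p q v V = typeof s Q (k+1) p q w W) (S : Set A) :
    ∃ T : Set B, typeof r P k p (q+1) v (Function.update V q S)
      = typeof s Q k p (q+1) w (Function.update W q T) := by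
  have h2 := congrArg (fun t : Ty n (k+1) p q => t.2.2) h
  simp only [typeof] at h2
  have hmem : typeof r P k p (q+1) v (Function.update V q S) ∈
      (Set.toFinite (Set.range fun S : Set A =>
        typeof r P k p (q+1) v (Function.update V q S))).toFinset := by
    rw [Set.Finite.mem_toFinset]; exact ⟨S, rfl⟩
  rw [h2, Set.Finite.mem_toFinset] at hmem
  obtain ⟨T, hT⟩ := hmem
  exact ⟨T, hT.symm⟩

end EF
end MSO
namespace MSO
section Hintikka
variable {n : ℕ}

lemma sat_congr {A : Type} {r : A → A → Prop} {P : Fin n → Set A} :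
    ∀ (φ : MSO n) (v w : ℕ → A) (V W : ℕ → Set A),
      (∀ i ∈ fv1 φ, v i = w i) → (∀ j ∈ fv2 φ, V j = W j) →
      (Sat r P v V φ ↔ Sat r P w W φ)
  | lt i j, v, w, V, W, h1, h2 => by
    simp only [Sat]
    rw [h1 i (by simp [fv1]), h1 j (by simp [fv1])]
  | pred c i, v, w, V, W, h1, h2 => by
    simp only [Sat]
    rw [h1 i (by simp [fv1])]
  | mem i j, v, w, V, W, h1, h2 => by
    simp only [Sat]
    rw [h1 i (by simp [fv1]), h2 j (by simp [fv2])]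
  | not φ, v, w, V, W, h1, h2 => by
    simp only [Sat]
    rw [sat_congr φ v w V W h1 h2]
  | and φ ψ, v, w, V, W, h1, h2 => by
    simp only [Sat]
    rw [sat_congr φ v w V W (fun i hi => h1 i (by simp [fv1, hi]))
        (fun j hj => h2 j (by simp [fv2, hj])),
      sat_congr ψ v w V W (fun i hi => h1 i (by simp [fv1, hi]))
        (fun j hj => h2 j (by simp [fv2, hj]))]
  | ex1 i φ, v, w, V, W, h1, h2 => by
    simp only [Sat]
    refine exists_congr fun a => ?_
    refine sat_congr φ _ _ _ _ (fun i' hi' => ?_) h2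
    by_cases hii : i' = i
    · subst hii; simp
    · rw [Function.update_of_ne hii, Function.update_of_ne hii]
      exact h1 i' (by simp [fv1, hi', hii])
  | ex2 j φ, v, w, V, W, h1, h2 => by
    simp only [Sat]
    refine exists_congr fun S => ?_
    refine sat_congr φ _ _ _ _ h1 (fun j' hj' => ?_)
    by_cases hjj : j' = j
    · subst hjj; simp
    · rw [Function.update_of_ne hjj, Function.update_of_ne hjj]
      exact h2 j' (by simp [fv2, hj', hjj])

/-- A sentence of depth 1 true exactly in nonempty structures. -/
def trueF : MSO n := .ex1 0 (.not (.and (.lt 0 0) (.not (.lt 0 0))))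

lemma sat_trueF {A : Type} [Nonempty A] {r : A → A → Prop} {P : Fin n → Set A}
    {v : ℕ → A} {V : ℕ → Set A} : Sat r P v V (trueF : MSO n) := by
  obtain ⟨a⟩ := ‹Nonempty A›
  exact ⟨a, fun h => h.2 h.1⟩

lemma qd_trueF : qd (trueF : MSO n) = 1 := rfl

lemma fv1_trueF : fv1 (trueF : MSO n) = ∅ := by
  simp [trueF, fv1]

lemma fv2_trueF : fv2 (trueF : MSO n) = ∅ := by
  simp [trueF, fv2]

def bigAnd (l : List (MSO n)) : MSO n := l.foldr .and trueF

def bigOr (l : List (MSO n)) : MSO n := .not (bigAnd (l.map .not))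

lemma sat_bigAnd {A : Type} [Nonempty A] {r : A → A → Prop} {P : Fin n → Set A}
    {v : ℕ → A} {V : ℕ → Set A} (l : List (MSO n)) :
    Sat r P v V (bigAnd l) ↔ ∀ φ ∈ l, Sat r P v V φ := by
  induction l with
  | nil => simpa [bigAnd] using sat_trueF
  | cons φ l ih =>
    simp only [bigAnd, List.foldr_cons, Sat] at *
    rw [ih]; simp

lemma sat_bigOr {A : Type} [Nonempty A] {r : A → A → Prop} {P : Fin n → Set A}
    {v : ℕ → A} {V : ℕ → Set A} (l : List (MSO n)) :
    Sat r P v V (bigOr l) ↔ ∃ φ ∈ l, Sat r P v V φ := by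
  simp only [bigOr, Sat, sat_bigAnd, List.mem_map]
  constructor
  · intro h
    by_contra hc
    push_neg at hc
    exact h fun ψ ⟨φ, hφ, he⟩ => he ▸ fun hs => hc φ hφ hs
  · rintro ⟨φ, hφ, hs⟩ h
    exact h (.not φ) ⟨φ, hφ, rfl⟩ hs

lemma qd_bigAnd {l : List (MSO n)} {m : ℕ} (hm : 1 ≤ m) (h : ∀ φ ∈ l, qd φ ≤ m) :
    qd (bigAnd l) ≤ m := by
  induction l with
  | nil => exact hm
  | cons φ l ih =>
    simp only [bigAnd, List.foldr_cons, qd, max_le_iff]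
    exact ⟨h φ (by simp), ih fun ψ hψ => h ψ (by simp [hψ])⟩

lemma qd_bigOr {l : List (MSO n)} {m : ℕ} (hm : 1 ≤ m) (h : ∀ φ ∈ l, qd φ ≤ m) :
    qd (bigOr l) ≤ m := by
  simp only [bigOr, qd]
  refine qd_bigAnd hm ?_
  intro ψ hψ
  simp only [List.mem_map] at hψ
  obtain ⟨φ, hφ, rfl⟩ := hψ
  exact h φ hφ

lemma fv1_bigAnd {l : List (MSO n)} {s : Finset ℕ} (h : ∀ φ ∈ l, fv1 φ ⊆ s) :
    fv1 (bigAnd l) ⊆ s := by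
  induction l with
  | nil => rw [bigAnd, List.foldr_nil, fv1_trueF]; exact Finset.empty_subset s
  | cons φ l ih =>
    simp only [bigAnd, List.foldr_cons, fv1, Finset.union_subset_iff]
    exact ⟨h φ (by simp), ih fun ψ hψ => h ψ (by simp [hψ])⟩

lemma fv2_bigAnd {l : List (MSO n)} {s : Finset ℕ} (h : ∀ φ ∈ l, fv2 φ ⊆ s) :
    fv2 (bigAnd l) ⊆ s := by
  induction l with
  | nil => rw [bigAnd, List.foldr_nil, fv2_trueF]; exact Finset.empty_subset s
  | cons φ l ih =>
    simp only [bigAnd, List.foldr_cons, fv2, Finset.union_subset_iff]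
    exact ⟨h φ (by simp), ih fun ψ hψ => h ψ (by simp [hψ])⟩

lemma fv1_bigOr {l : List (MSO n)} {s : Finset ℕ} (h : ∀ φ ∈ l, fv1 φ ⊆ s) :
    fv1 (bigOr l) ⊆ s := by
  simp only [bigOr, fv1]
  refine fv1_bigAnd ?_
  intro ψ hψ
  simp only [List.mem_map] at hψ
  obtain ⟨φ, hφ, rfl⟩ := hψ
  exact h φ hφ

lemma fv2_bigOr {l : List (MSO n)} {s : Finset ℕ} (h : ∀ φ ∈ l, fv2 φ ⊆ s) :
    fv2 (bigOr l) ⊆ s := by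
  simp only [bigOr, fv2]
  refine fv2_bigAnd ?_
  intro ψ hψ
  simp only [List.mem_map] at hψ
  obtain ⟨φ, hφ, rfl⟩ := hψ
  exact h φ hφ

end Hintikka
end MSO
namespace MSO
section Hintikka2
variable {n : ℕ}

open Classical in
/-- A literal: `φ` if `c` holds, `¬φ` otherwise. -/
noncomputable def lit (c : Prop) (φ : MSO n) : MSO n := if c then φ else .not φ

lemma sat_lit {A : Type} {r : A → A → Prop} {P : Fin n → Set A}
    {v : ℕ → A} {V : ℕ → Set A} (c : Prop) (φ : MSO n) :
    Sat r P v V (lit c φ) ↔ (Sat r P v V φ ↔ c) := by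
  by_cases h : c <;> simp [lit, h, Sat]

lemma qd_lit (c : Prop) (φ : MSO n) : qd (lit c φ) = qd φ := by
  by_cases h : c <;> simp [lit, h, qd]

lemma fv1_lit (c : Prop) (φ : MSO n) : fv1 (lit c φ) = fv1 φ := by
  by_cases h : c <;> simp [lit, h, fv1]

lemma fv2_lit (c : Prop) (φ : MSO n) : fv2 (lit c φ) = fv2 φ := by
  by_cases h : c <;> simp [lit, h, fv2]

def forallAnd {α : Type} (l : List α) (f : α → MSO n) : MSO n := bigAnd (l.map f)

lemma sat_forallAnd {α : Type} {A : Type} [Nonempty A] {r : A → A → Prop}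
    {P : Fin n → Set A} {v : ℕ → A} {V : ℕ → Set A} (l : List α) (f : α → MSO n) :
    Sat r P v V (forallAnd l f) ↔ ∀ x ∈ l, Sat r P v V (f x) := by
  rw [forallAnd, sat_bigAnd]; simp

lemma qd_forallAnd {α : Type} {l : List α} {f : α → MSO n} {m : ℕ} (hm : 1 ≤ m)
    (h : ∀ x ∈ l, qd (f x) ≤ m) : qd (forallAnd l f) ≤ m := by
  refine qd_bigAnd hm ?_
  intro ψ hψ
  simp only [List.mem_map] at hψ
  obtain ⟨x, hx, rfl⟩ := hψ
  exact h x hx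

lemma fv1_forallAnd {α : Type} {l : List α} {f : α → MSO n} {s : Finset ℕ}
    (h : ∀ x ∈ l, fv1 (f x) ⊆ s) : fv1 (forallAnd l f) ⊆ s := by
  refine fv1_bigAnd ?_
  intro ψ hψ
  simp only [List.mem_map] at hψ
  obtain ⟨x, hx, rfl⟩ := hψ
  exact h x hx

lemma fv2_forallAnd {α : Type} {l : List α} {f : α → MSO n} {s : Finset ℕ}
    (h : ∀ x ∈ l, fv2 (f x) ⊆ s) : fv2 (forallAnd l f) ⊆ s := by
  refine fv2_bigAnd ?_
  intro ψ hψ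
  simp only [List.mem_map] at hψ
  obtain ⟨x, hx, rfl⟩ := hψ
  exact h x hx

/-- A formula expressing that the atomic diagram equals `t`. -/
noncomputable def diagForm (p q : ℕ) (t : T0 n p q) : MSO n :=
  forallAnd (List.finRange p) fun i => .and
    (forallAnd (List.finRange p) fun j => lit (t.1 i j) (.lt i j))
    (.and (forallAnd (List.finRange n) fun c => lit (t.2.1 i c) (.pred c i))
      (forallAnd (List.finRange q) fun j => lit (t.2.2 i j) (.mem i j)))

lemma sat_diagForm {A : Type} [Nonempty A] {r : A → A → Prop} {P : Fin n → Set A}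
    {v : ℕ → A} {V : ℕ → Set A} {p q : ℕ} {t : T0 n p q} :
    Sat r P v V (diagForm p q t) ↔ diag r P p q v V = t := by
  rw [diagForm, sat_forallAnd]
  simp only [Sat, sat_forallAnd, sat_lit, List.mem_finRange, true_implies]
  constructor
  · intro h
    refine Prod.ext ?_ (Prod.ext ?_ ?_)
    · funext i j; exact propext ((h i).1 j)
    · funext i c; exact propext ((h i).2.1 c)
    · funext i j; exact propext ((h i).2.2 j)
  · intro h
    rw [← h]
    exact fun i => ⟨fun j => Iff.rfl, fun c => Iff.rfl, fun j => Iff.rfl⟩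

lemma qd_diagForm {p q : ℕ} {t : T0 n p q} : qd (diagForm p q t) ≤ 1 := by
  refine qd_forallAnd le_rfl fun i _ => ?_
  simp only [qd, max_le_iff]
  exact ⟨qd_forallAnd le_rfl fun j _ => by simp [qd_lit, qd],
    qd_forallAnd le_rfl fun c _ => by simp [qd_lit, qd],
    qd_forallAnd le_rfl fun j _ => by simp [qd_lit, qd]⟩

lemma fv1_diagForm {p q : ℕ} {t : T0 n p q} : fv1 (diagForm p q t) ⊆ Finset.range p := by
  refine fv1_forallAnd fun i _ => ?_
  simp only [fv1, Finset.union_subset_iff]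
  refine ⟨fv1_forallAnd fun j _ => ?_, fv1_forallAnd fun c _ => ?_,
    fv1_forallAnd fun j _ => ?_⟩ <;>
    rw [fv1_lit] <;> simp only [fv1] <;> intro x hx <;>
    simp only [Finset.mem_insert, Finset.mem_singleton] at hx <;>
    simp only [Finset.mem_range]
  · rcases hx with rfl | rfl
    · exact i.2
    · exact j.2
  · rcases hx with rfl
    · exact i.2
  · rcases hx with rfl
    · exact i.2

lemma fv2_diagForm {p q : ℕ} {t : T0 n p q} : fv2 (diagForm p q t) ⊆ Finset.range q := by
  refine fv2_forallAnd fun i _ => ?_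
  simp only [fv2, Finset.union_subset_iff]
  refine ⟨fv2_forallAnd fun j _ => ?_, fv2_forallAnd fun c _ => ?_,
    fv2_forallAnd fun j _ => ?_⟩ <;> rw [fv2_lit] <;> simp only [fv2]
  · exact Finset.empty_subset _
  · exact Finset.empty_subset _
  · intro x hx
    simp only [Finset.mem_singleton] at hx
    simp only [Finset.mem_range]
    rcases hx with rfl
    exact j.2

end Hintikka2
end MSO
namespace MSO
section Hintikka3
variable {n : ℕ}

lemma sat_bigAndNot_iff {A : Type} [Nonempty A] {r : A → A → Prop} {P : Fin n → Set A}
    {v : ℕ → A} {V : ℕ → Set A} (l : List (MSO n)) :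
    ¬ Sat r P v V (bigAnd (l.map .not)) ↔ ∃ φ ∈ l, Sat r P v V φ := by
  rw [sat_bigAnd]
  constructor
  · intro h
    by_contra hc
    push_neg at hc
    refine h ?_
    intro ψ hψ
    simp only [List.mem_map] at hψ
    obtain ⟨φ, hφ, rfl⟩ := hψ
    exact fun hs => hc φ hφ hs
  · rintro ⟨φ, hφ, hs⟩ h
    exact (h (.not φ) (List.mem_map_of_mem hφ)) hs

/-- The Hintikka formula of a type object. -/
noncomputable def theta : (k p q : ℕ) → Ty n k p q → MSO n
  | 0, p, q, t => diagForm p q t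
  | k+1, p, q, t =>
    .and (diagForm p q t.1)
      (.and
        (.and (forallAnd t.2.1.toList fun s => .ex1 p (theta k (p+1) q s))
          (.not (.ex1 p (.not (bigOr (t.2.1.toList.map fun s => theta k (p+1) q s))))))
        (.and (forallAnd t.2.2.toList fun s => .ex2 q (theta k p (q+1) s))
          (.not (.ex2 q (.not (bigOr (t.2.2.toList.map fun s => theta k p (q+1) s)))))))

lemma qd_theta : ∀ (k p q : ℕ) (t : Ty n k p q), qd (theta k p q t) ≤ k + 1
  | 0, p, q, t => qd_diagForm
  | k+1, p, q, t => by
    have ih1 : ∀ s ∈ t.2.1.toList, qd (theta k (p+1) q s) ≤ k + 1 :=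
      fun s _ => qd_theta k (p+1) q s
    have ih2 : ∀ s ∈ t.2.2.toList, qd (theta k p (q+1) s) ≤ k + 1 :=
      fun s _ => qd_theta k p (q+1) s
    show qd (.and _ (.and (.and _ _) (.and _ _))) ≤ k + 2
    dsimp only [qd]; simp only [max_le_iff]
    refine ⟨qd_diagForm.trans (by omega), ⟨?_, ?_⟩, ?_, ?_⟩
    · refine (qd_forallAnd (by omega) fun s hs => ?_).trans le_rfl
      dsimp only [qd]
      exact Nat.add_le_add_right (qd_theta k (p+1) q s) 1
    · refine Nat.add_le_add_right ?_ 1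
      refine qd_bigOr (by omega) ?_
      intro ψ hψ
      simp only [List.mem_map] at hψ
      obtain ⟨s, hs, rfl⟩ := hψ
      exact qd_theta k (p+1) q s
    · refine qd_forallAnd (by omega) fun s hs => ?_
      dsimp only [qd]
      exact Nat.add_le_add_right (qd_theta k p (q+1) s) 1
    · refine Nat.add_le_add_right ?_ 1
      refine qd_bigOr (by omega) ?_
      intro ψ hψ
      simp only [List.mem_map] at hψ
      obtain ⟨s, hs, rfl⟩ := hψ
      exact qd_theta k p (q+1) s

lemma fv1_theta : ∀ (k p q : ℕ) (t : Ty n k p q), fv1 (theta k p q t) ⊆ Finset.range p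
  | 0, p, q, t => fv1_diagForm
  | k+1, p, q, t => by
    have key : ∀ s : Ty n k (p+1) q, fv1 (theta k (p+1) q s) \ {p} ⊆ Finset.range p := by
      intro s
      intro x hx
      simp only [Finset.mem_sdiff, Finset.mem_singleton] at hx
      have := fv1_theta k (p+1) q s hx.1
      simp only [Finset.mem_range] at this ⊢
      omega
    show fv1 (.and _ (.and (.and _ _) (.and _ _))) ⊆ Finset.range p
    dsimp only [fv1]; simp only [Finset.union_subset_iff]
    refine ⟨fv1_diagForm, ⟨?_, ?_⟩, ?_, ?_⟩
    · refine fv1_forallAnd fun s hs => ?_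
      dsimp only [fv1]
      exact key s
    · intro x hx
      simp only [Finset.mem_sdiff, Finset.mem_singleton] at hx
      have := fv1_bigOr (s := Finset.range (p+1)) ?_ hx.1
      · simp only [Finset.mem_range] at this ⊢
        rcases hx with ⟨_, hne⟩
        omega
      · intro ψ hψ
        simp only [List.mem_map] at hψ
        obtain ⟨s, hs, rfl⟩ := hψ
        exact fv1_theta k (p+1) q s
    · refine fv1_forallAnd fun s hs => ?_
      dsimp only [fv1]
      exact fv1_theta k p (q+1) s
    · refine fv1_bigOr ?_
      intro ψ hψ
      simp only [List.mem_map] at hψ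
      obtain ⟨s, hs, rfl⟩ := hψ
      exact fv1_theta k p (q+1) s

lemma fv2_theta : ∀ (k p q : ℕ) (t : Ty n k p q), fv2 (theta k p q t) ⊆ Finset.range q
  | 0, p, q, t => fv2_diagForm
  | k+1, p, q, t => by
    show fv2 (.and _ (.and (.and _ _) (.and _ _))) ⊆ Finset.range q
    dsimp only [fv2]; simp only [Finset.union_subset_iff]
    refine ⟨fv2_diagForm, ⟨?_, ?_⟩, ?_, ?_⟩
    · refine fv2_forallAnd fun s hs => ?_
      dsimp only [fv2]
      exact fv2_theta k (p+1) q s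
    · refine fv2_bigOr ?_
      intro ψ hψ
      simp only [List.mem_map] at hψ
      obtain ⟨s, hs, rfl⟩ := hψ
      exact fv2_theta k (p+1) q s
    · refine fv2_forallAnd fun s hs => ?_
      dsimp only [fv2]
      intro x hx
      simp only [Finset.mem_sdiff, Finset.mem_singleton] at hx
      have := fv2_theta k p (q+1) s hx.1
      simp only [Finset.mem_range] at this ⊢
      rcases hx with ⟨_, hne⟩
      omega
    · intro x hx
      simp only [Finset.mem_sdiff, Finset.mem_singleton] at hx
      have := fv2_bigOr (s := Finset.range (q+1)) ?_ hx.1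
      · simp only [Finset.mem_range] at this ⊢
        rcases hx with ⟨_, hne⟩
        omega
      · intro ψ hψ
        simp only [List.mem_map] at hψ
        obtain ⟨s, hs, rfl⟩ := hψ
        exact fv2_theta k p (q+1) s

lemma sat_theta {A : Type} [Nonempty A] {r : A → A → Prop} {P : Fin n → Set A} :
    ∀ (k p q : ℕ) (v : ℕ → A) (V : ℕ → Set A) (t : Ty n k p q),
      Sat r P v V (theta k p q t) ↔ typeof r P k p q v V = t
  | 0, p, q, v, V, t => sat_diagForm
  | k+1, p, q, v, V, t => by
    have hty : typeof r P (k+1) p q v V = (⟨diag r P p q v V,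
        (Set.toFinite (Set.range fun a : A =>
          typeof r P k (p+1) q (Function.update v p a) V)).toFinset,
        (Set.toFinite (Set.range fun S : Set A =>
          typeof r P k p (q+1) v (Function.update V q S))).toFinset⟩ : Ty n (k+1) p q) := rfl
    have hchar : typeof r P (k+1) p q v V = t ↔
        diag r P p q v V = t.1 ∧
        ((∀ s ∈ t.2.1, ∃ a, typeof r P k (p+1) q (Function.update v p a) V = s) ∧
          (∀ a, typeof r P k (p+1) q (Function.update v p a) V ∈ t.2.1)) ∧
        ((∀ s ∈ t.2.2, ∃ S, typeof r P k p (q+1) v (Function.update V q S) = s) ∧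
          (∀ S, typeof r P k p (q+1) v (Function.update V q S) ∈ t.2.2)) := by
      have hsplit : ∀ (x y : Ty n (k+1) p q), x = y ↔
          (x.1 = y.1 ∧ x.2.1 = y.2.1 ∧ x.2.2 = y.2.2) := by
        intro x y
        constructor
        · rintro rfl; exact ⟨rfl, rfl, rfl⟩
        · rintro ⟨h1, h2, h3⟩; exact Prod.ext h1 (Prod.ext h2 h3)
      rw [hsplit]
      have e1 : ((Set.toFinite (Set.range fun a : A =>
          typeof r P k (p+1) q (Function.update v p a) V)).toFinset = t.2.1) ↔
          ((∀ s ∈ t.2.1, ∃ a, typeof r P k (p+1) q (Function.update v p a) V = s) ∧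
            (∀ a, typeof r P k (p+1) q (Function.update v p a) V ∈ t.2.1)) := by
        rw [Finset.Subset.antisymm_iff]
        constructor
        · rintro ⟨h1, h2⟩
          constructor
          · intro s hs
            have := h2 hs
            rw [Set.Finite.mem_toFinset, Set.mem_range] at this
            obtain ⟨a, ha⟩ := this
            exact ⟨a, ha⟩
          · intro a
            exact h1 (by rw [Set.Finite.mem_toFinset]; exact ⟨a, rfl⟩)
        · rintro ⟨h1, h2⟩
          constructor
          · intro x hx
            rw [Set.Finite.mem_toFinset, Set.mem_range] at hx
            obtain ⟨a, rfl⟩ := hx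
            exact h2 a
          · intro s hs
            obtain ⟨a, ha⟩ := h1 s hs
            rw [Set.Finite.mem_toFinset]
            exact ⟨a, ha⟩
      have e2 : ((Set.toFinite (Set.range fun S : Set A =>
          typeof r P k p (q+1) v (Function.update V q S))).toFinset = t.2.2) ↔
          ((∀ s ∈ t.2.2, ∃ S, typeof r P k p (q+1) v (Function.update V q S) = s) ∧
            (∀ S, typeof r P k p (q+1) v (Function.update V q S) ∈ t.2.2)) := by
        rw [Finset.Subset.antisymm_iff]
        constructor
        · rintro ⟨h1, h2⟩
          constructor
          · intro s hs
            have := h2 hs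
            rw [Set.Finite.mem_toFinset, Set.mem_range] at this
            obtain ⟨S, hS⟩ := this
            exact ⟨S, hS⟩
          · intro S
            exact h1 (by rw [Set.Finite.mem_toFinset]; exact ⟨S, rfl⟩)
        · rintro ⟨h1, h2⟩
          constructor
          · intro x hx
            rw [Set.Finite.mem_toFinset, Set.mem_range] at hx
            obtain ⟨S, rfl⟩ := hx
            exact h2 S
          · intro s hs
            obtain ⟨S, hS⟩ := h1 s hs
            rw [Set.Finite.mem_toFinset]
            exact ⟨S, hS⟩
      exact and_congr Iff.rfl (and_congr e1 e2)
    rw [hchar]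
    show Sat r P v V (.and _ (.and (.and _ _) (.and _ _))) ↔ _
    simp only [Sat, sat_diagForm, sat_forallAnd, Finset.mem_toList, not_exists, not_not]
    constructor
    · rintro ⟨h1, ⟨h2, h3⟩, h4, h5⟩
      refine ⟨h1, ⟨?_, ?_⟩, ?_, ?_⟩
      · intro s hs
        obtain ⟨a, ha⟩ := h2 s hs
        exact ⟨a, (sat_theta k (p+1) q _ _ s).mp ha⟩
      · intro a
        have := (sat_bigAndNot_iff _).mp (h3 a)
        obtain ⟨ψ, hψ, hsat⟩ := this
        simp only [List.mem_map, Finset.mem_toList] at hψ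
        obtain ⟨s, hs, rfl⟩ := hψ
        rw [sat_theta k (p+1) q _ _ s] at hsat
        rw [hsat]
        exact hs
      · intro s hs
        obtain ⟨S, hS⟩ := h4 s hs
        exact ⟨S, (sat_theta k p (q+1) _ _ s).mp hS⟩
      · intro S
        have := (sat_bigAndNot_iff _).mp (h5 S)
        obtain ⟨ψ, hψ, hsat⟩ := this
        simp only [List.mem_map, Finset.mem_toList] at hψ
        obtain ⟨s, hs, rfl⟩ := hψ
        rw [sat_theta k p (q+1) _ _ s] at hsat
        rw [hsat]
        exact hs
    · rintro ⟨h1, ⟨h2, h3⟩, h4, h5⟩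
      refine ⟨h1, ⟨?_, ?_⟩, ?_, ?_⟩
      · intro s hs
        obtain ⟨a, ha⟩ := h2 s hs
        exact ⟨a, (sat_theta k (p+1) q _ _ s).mpr ha⟩
      · intro a
        rw [sat_bigOr]
        refine ⟨theta k (p+1) q (typeof r P k (p+1) q (Function.update v p a) V), ?_, ?_⟩
        · simp only [List.mem_map, Finset.mem_toList]
          exact ⟨_, h3 a, rfl⟩
        · exact (sat_theta k (p+1) q _ _ _).mpr rfl
      · intro s hs
        obtain ⟨S, hS⟩ := h4 s hs
        exact ⟨S, (sat_theta k p (q+1) _ _ s).mpr hS⟩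
      · intro S
        rw [sat_bigOr]
        refine ⟨theta k p (q+1) (typeof r P k p (q+1) v (Function.update V q S)), ?_, ?_⟩
        · simp only [List.mem_map, Finset.mem_toList]
          exact ⟨_, h5 S, rfl⟩
        · exact (sat_theta k p (q+1) _ _ _).mpr rfl

/-- Sentence equivalence at depth `k+1` forces equality of depth-`k` types. -/
lemma typeof_eq_of_equivType {A B : Type} [Nonempty A] [Nonempty B]
    {r : A → A → Prop} {P : Fin n → Set A} {s : B → B → Prop} {Q : Fin n → Set B}
    {K k : ℕ} (heq : EquivType K r P s Q) (hk : k + 1 ≤ K)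
    (vA : ℕ → A) (VA : ℕ → Set A) (vB : ℕ → B) (VB : ℕ → Set B) :
    typeof r P k 0 0 vA VA = typeof s Q k 0 0 vB VB := by
  set t := typeof r P k 0 0 vA VA with ht
  have hsent : IsSentence (theta k 0 0 t) := by
    constructor
    · have := fv1_theta (n := n) k 0 0 t
      simpa using Finset.subset_empty.mp (by simpa using this)
    · have := fv2_theta (n := n) k 0 0 t
      simpa using Finset.subset_empty.mp (by simpa using this)
  have hqd : qd (theta k 0 0 t) ≤ K := (qd_theta k 0 0 t).trans hk
  have hA : TrueIn r P (theta k 0 0 t) := by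
    intro v V
    rw [sat_theta]
    exact typeof_congr k 0 0 v vA V VA (fun i hi => absurd hi (Nat.not_lt_zero i))
      (fun j hj => absurd hj (Nat.not_lt_zero j))
  have hB : TrueIn s Q (theta k 0 0 t) := (heq _ hsent hqd).mp hA
  have := hB vB VB
  rw [sat_theta] at this
  exact this.symm

end Hintikka3
end MSO
section Comp

variable {n : ℕ}

lemma cut_le_apply {cs : ℕ → ℕ} (hcs : StrictMono cs) : ∀ m, m ≤ cs m := by
  intro m
  induction m with
  | zero => exact Nat.zero_le _
  | succ m ih => exact Nat.succ_le_of_lt (lt_of_le_of_lt ih (hcs (Nat.lt_succ_self m)))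

lemma exists_blk {cs : ℕ → ℕ} (hcs : StrictMono cs) (hc0 : cs 0 = 0) (a : ℕ) :
    ∃ m, a ∈ Set.Ico (cs m) (cs (m+1)) := by
  classical
  set m := Nat.findGreatest (fun m => cs m ≤ a) a with hm
  have h0 : cs 0 ≤ a := by omega
  have hspec : cs m ≤ a := by
    have := Nat.findGreatest_spec (P := fun m => cs m ≤ a) (Nat.zero_le a) h0
    exact this
  refine ⟨m, hspec, ?_⟩
  by_contra hc
  push_neg at hc
  have hle : m + 1 ≤ a := le_trans (cut_le_apply hcs (m+1)) hc
  have := Nat.le_findGreatest (P := fun m => cs m ≤ a) hle hc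
  omega

lemma blk_unique {cs : ℕ → ℕ} (hcs : StrictMono cs) {a : ℕ} {m m' : ℕ}
    (h : a ∈ Set.Ico (cs m) (cs (m+1))) (h' : a ∈ Set.Ico (cs m') (cs (m'+1))) :
    m = m' := by
  rcases lt_trichotomy m m' with hlt | he | hgt
  · exfalso
    have : cs (m+1) ≤ cs m' := hcs.monotone hlt
    rw [Set.mem_Ico] at h h'
    omega
  · exact he
  · exfalso
    have : cs (m'+1) ≤ cs m := hcs.monotone hgt
    rw [Set.mem_Ico] at h h'
    omega

open MSO in
/-- The composition lemma: if two cut systems on `ℕ` have blockwise-equal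
types (with matched recorded local assignments), then globally matched
assignments satisfy the same formulas of appropriate depth. -/
lemma comp_lemma (P : Fin n → Set ℕ) (cs ds : ℕ → ℕ)
    (hcs : StrictMono cs) (hc0 : cs 0 = 0) (hds : StrictMono ds) (hd0 : ds 0 = 0) :
    ∀ (φ : MSO n) (k p q : ℕ), qd φ ≤ k →
    ∀ (vloc : ∀ m : ℕ, ℕ → ↥(Set.Ico (cs m) (cs (m+1))))
      (Vloc : ∀ m : ℕ, ℕ → Set ↥(Set.Ico (cs m) (cs (m+1))))
      (wloc : ∀ m : ℕ, ℕ → ↥(Set.Ico (ds m) (ds (m+1))))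
      (Wloc : ∀ m : ℕ, ℕ → Set ↥(Set.Ico (ds m) (ds (m+1))))
      (hT : ∀ m, typeof (subRel (fun x y : ℕ => x < y) (Set.Ico (cs m) (cs (m+1))))
          (subPred P (Set.Ico (cs m) (cs (m+1)))) k p q (vloc m) (Vloc m)
        = typeof (subRel (fun x y : ℕ => x < y) (Set.Ico (ds m) (ds (m+1))))
          (subPred P (Set.Ico (ds m) (ds (m+1)))) k p q (wloc m) (Wloc m))
      (x y : ℕ → ℕ) (X Y : ℕ → Set ℕ)
      (hx : ∀ i ∈ fv1 φ, ∃ s < p, ∃ m, x i = ↑(vloc m s) ∧ y i = ↑(wloc m s))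
      (hX : ∀ j ∈ fv2 φ, ∃ s < q,
        (∀ z : ℕ, z ∈ X j ↔ ∃ m, ∃ hz : z ∈ Set.Ico (cs m) (cs (m+1)),
          (⟨z, hz⟩ : ↥(Set.Ico (cs m) (cs (m+1)))) ∈ Vloc m s) ∧
        (∀ z : ℕ, z ∈ Y j ↔ ∃ m, ∃ hz : z ∈ Set.Ico (ds m) (ds (m+1)),
          (⟨z, hz⟩ : ↥(Set.Ico (ds m) (ds (m+1)))) ∈ Wloc m s)),
      (Sat (fun x y : ℕ => x < y) P x X φ ↔ Sat (fun x y : ℕ => x < y) P y Y φ)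
  | .lt i j, k, p, q, hk, vloc, Vloc, wloc, Wloc, hT, x, y, X, Y, hx, hX => by
    obtain ⟨si, hsi, mi, hxi, hyi⟩ := hx i (by simp [fv1])
    obtain ⟨sj, hsj, mj, hxj, hyj⟩ := hx j (by simp [fv1])
    show x i < x j ↔ y i < y j
    rcases lt_trichotomy mi mj with hlt | he | hgt
    · have h1 : x i < x j := by
        have hb1 : x i < cs (mi+1) := by rw [hxi]; exact ((vloc mi si).2).2
        have hb2 : cs mj ≤ x j := by rw [hxj]; exact ((vloc mj sj).2).1
        have hmono : cs (mi+1) ≤ cs mj := hcs.monotone hlt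
        omega
      have h2 : y i < y j := by
        have hb1 : y i < ds (mi+1) := by rw [hyi]; exact ((wloc mi si).2).2
        have hb2 : ds mj ≤ y j := by rw [hyj]; exact ((wloc mj sj).2).1
        have hmono : ds (mi+1) ≤ ds mj := hds.monotone hlt
        omega
      exact iff_of_true h1 h2
    · subst he
      have hd := typeof_diag (hT mi)
      have := diag_rel hd ⟨si, hsi⟩ ⟨sj, hsj⟩
      have hgoal : (↑(vloc mi si) < (↑(vloc mi sj) : ℕ)) ↔
          (↑(wloc mi si) < (↑(wloc mi sj) : ℕ)) := this
      rw [hxi, hxj, hyi, hyj]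
      exact hgoal
    · have h1 : ¬ (x i < x j) := by
        have hb1 : cs mi ≤ x i := by rw [hxi]; exact ((vloc mi si).2).1
        have hb2 : x j < cs (mj+1) := by rw [hxj]; exact ((vloc mj sj).2).2
        have hmono : cs (mj+1) ≤ cs mi := hcs.monotone hgt
        omega
      have h2 : ¬ (y i < y j) := by
        have hb1 : ds mi ≤ y i := by rw [hyi]; exact ((wloc mi si).2).1
        have hb2 : y j < ds (mj+1) := by rw [hyj]; exact ((wloc mj sj).2).2
        have hmono : ds (mj+1) ≤ ds mi := hds.monotone hgt
        omega
      exact iff_of_false h1 h2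
  | .pred c i, k, p, q, hk, vloc, Vloc, wloc, Wloc, hT, x, y, X, Y, hx, hX => by
    obtain ⟨si, hsi, mi, hxi, hyi⟩ := hx i (by simp [fv1])
    show x i ∈ P c ↔ y i ∈ P c
    have hd := typeof_diag (hT mi)
    have := diag_pred hd ⟨si, hsi⟩ c
    rw [hxi, hyi]
    exact this
  | .mem i j, k, p, q, hk, vloc, Vloc, wloc, Wloc, hT, x, y, X, Y, hx, hX => by
    obtain ⟨si, hsi, mi, hxi, hyi⟩ := hx i (by simp [fv1])
    obtain ⟨sj, hsj, hXc, hYc⟩ := hX j (by simp [fv2])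
    show x i ∈ X j ↔ y i ∈ Y j
    rw [hXc (x i), hYc (y i)]
    have hd := typeof_diag (hT mi)
    have hdm := diag_mem hd ⟨si, hsi⟩ ⟨sj, hsj⟩
    constructor
    · rintro ⟨m, hz, hmem⟩
      have hxim : x i ∈ Set.Ico (cs mi) (cs (mi+1)) := by rw [hxi]; exact (vloc mi si).2
      have : m = mi := blk_unique hcs hz hxim
      subst this
      have he : (⟨x i, hz⟩ : ↥(Set.Ico (cs m) (cs (m+1)))) = vloc m si :=
        Subtype.ext hxi
      rw [he] at hmem
      have := hdm.mp hmem
      exact ⟨m, by rw [hyi]; exact (wloc m si).2, by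
        have he' : (⟨y i, by rw [hyi]; exact (wloc m si).2⟩ :
            ↥(Set.Ico (ds m) (ds (m+1)))) = wloc m si := Subtype.ext hyi
        rw [he']
        exact this⟩
    · rintro ⟨m, hz, hmem⟩
      have hyim : y i ∈ Set.Ico (ds mi) (ds (mi+1)) := by rw [hyi]; exact (wloc mi si).2
      have : m = mi := blk_unique hds hz hyim
      subst this
      have he : (⟨y i, hz⟩ : ↥(Set.Ico (ds m) (ds (m+1)))) = wloc m si :=
        Subtype.ext hyi
      rw [he] at hmem
      have := hdm.mpr hmem
      exact ⟨m, by rw [hxi]; exact (vloc m si).2, by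
        have he' : (⟨x i, by rw [hxi]; exact (vloc m si).2⟩ :
            ↥(Set.Ico (cs m) (cs (m+1)))) = vloc m si := Subtype.ext hxi
        rw [he']
        exact this⟩
  | .not φ, k, p, q, hk, vloc, Vloc, wloc, Wloc, hT, x, y, X, Y, hx, hX => by
    show ¬ _ ↔ ¬ _
    rw [comp_lemma P cs ds hcs hc0 hds hd0 φ k p q hk vloc Vloc wloc Wloc hT x y X Y hx hX]
  | .and φ ψ, k, p, q, hk, vloc, Vloc, wloc, Wloc, hT, x, y, X, Y, hx, hX => by
    show _ ∧ _ ↔ _ ∧ _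
    rw [comp_lemma P cs ds hcs hc0 hds hd0 φ k p q (le_trans (le_max_left _ _) hk)
        vloc Vloc wloc Wloc hT x y X Y
        (fun i hi => hx i (by simp [fv1, hi])) (fun j hj => hX j (by simp [fv2, hj])),
      comp_lemma P cs ds hcs hc0 hds hd0 ψ k p q (le_trans (le_max_right _ _) hk)
        vloc Vloc wloc Wloc hT x y X Y
        (fun i hi => hx i (by simp [fv1, hi])) (fun j hj => hX j (by simp [fv2, hj]))]
  | .ex1 i φ, k, p, q, hk, vloc, Vloc, wloc, Wloc, hT, x, y, X, Y, hx, hX => by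
    obtain ⟨k', rfl⟩ : ∃ k', k = k' + 1 := by
      have : 1 ≤ k := le_trans (by simp [qd]) hk
      exact ⟨k - 1, by omega⟩
    have hqd : qd φ ≤ k' := by
      have : qd φ + 1 ≤ k' + 1 := hk
      omega
    constructor
    · rintro ⟨a, ha⟩
      obtain ⟨mst, hmst⟩ := exists_blk hcs hc0 a
      set α : ∀ m, ↥(Set.Ico (cs m) (cs (m+1))) := fun m =>
        if hm : m = mst then ⟨a, by rw [hm]; exact hmst⟩
        else ⟨cs m, ⟨le_refl _, hcs (Nat.lt_succ_self m)⟩⟩ with hα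
      choose β hβ using fun m => reach_elem (hT m) (α m)
      refine ⟨↑(β mst), ?_⟩
      refine (comp_lemma P cs ds hcs hc0 hds hd0 φ k' (p+1) q hqd
        (fun m => Function.update (vloc m) p (α m)) Vloc
        (fun m => Function.update (wloc m) p (β m)) Wloc hβ
        _ _ X Y ?_ ?_).mp ha
      · intro i' hi'
        by_cases hii : i' = i
        · subst hii
          refine ⟨p, Nat.lt_succ_self p, mst, ?_, ?_⟩
          · rw [Function.update_self, Function.update_self, hα]
            simp
          · rw [Function.update_self, Function.update_self]
        · obtain ⟨s, hs, m, h1, h2⟩ := hx i' (by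
            simp only [fv1, Finset.mem_sdiff, Finset.mem_singleton]
            exact ⟨hi', hii⟩)
          refine ⟨s, Nat.lt_succ_of_lt hs, m, ?_, ?_⟩
          · simp only [Function.update_of_ne hii, Function.update_of_ne (Nat.ne_of_lt hs)]
            exact h1
          · simp only [Function.update_of_ne hii, Function.update_of_ne (Nat.ne_of_lt hs)]
            exact h2
      · intro j hj
        exact hX j (by simpa [fv2] using hj)
    · rintro ⟨b, hb⟩
      obtain ⟨mst, hmst⟩ := exists_blk hds hd0 b
      set β : ∀ m, ↥(Set.Ico (ds m) (ds (m+1))) := fun m =>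
        if hm : m = mst then ⟨b, by rw [hm]; exact hmst⟩
        else ⟨ds m, ⟨le_refl _, hds (Nat.lt_succ_self m)⟩⟩ with hβd
      choose α hα using fun m => reach_elem (hT m).symm (β m)
      refine ⟨↑(α mst), ?_⟩
      refine (comp_lemma P cs ds hcs hc0 hds hd0 φ k' (p+1) q hqd
        (fun m => Function.update (vloc m) p (α m)) Vloc
        (fun m => Function.update (wloc m) p (β m)) Wloc
        (fun m => (hα m).symm)
        _ _ X Y ?_ ?_).mpr hb
      · intro i' hi'
        by_cases hii : i' = i
        · subst hii
          refine ⟨p, Nat.lt_succ_self p, mst, ?_, ?_⟩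
          · rw [Function.update_self, Function.update_self]
          · rw [Function.update_self, Function.update_self, hβd]
            simp
        · obtain ⟨s, hs, m, h1, h2⟩ := hx i' (by
            simp only [fv1, Finset.mem_sdiff, Finset.mem_singleton]
            exact ⟨hi', hii⟩)
          refine ⟨s, Nat.lt_succ_of_lt hs, m, ?_, ?_⟩
          · simp only [Function.update_of_ne hii, Function.update_of_ne (Nat.ne_of_lt hs)]
            exact h1
          · simp only [Function.update_of_ne hii, Function.update_of_ne (Nat.ne_of_lt hs)]
            exact h2
      · intro j hj
        exact hX j (by simpa [fv2] using hj)
  | .ex2 j φ, k, p, q, hk, vloc, Vloc, wloc, Wloc, hT, x, y, X, Y, hx, hX => by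
    obtain ⟨k', rfl⟩ : ∃ k', k = k' + 1 := by
      have : 1 ≤ k := le_trans (by simp [qd]) hk
      exact ⟨k - 1, by omega⟩
    have hqd : qd φ ≤ k' := by
      have : qd φ + 1 ≤ k' + 1 := hk
      omega
    constructor
    · rintro ⟨S, hS⟩
      set Sl : ∀ m, Set ↥(Set.Ico (cs m) (cs (m+1))) := fun m =>
        {z | (z : ℕ) ∈ S} with hSl
      choose T hT' using fun m => reach_set (hT m) (Sl m)
      refine ⟨{z : ℕ | ∃ m, ∃ hz : z ∈ Set.Ico (ds m) (ds (m+1)),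
        (⟨z, hz⟩ : ↥(Set.Ico (ds m) (ds (m+1)))) ∈ T m}, ?_⟩
      refine (comp_lemma P cs ds hcs hc0 hds hd0 φ k' p (q+1) hqd
        vloc (fun m => Function.update (Vloc m) q (Sl m))
        wloc (fun m => Function.update (Wloc m) q (T m)) hT'
        x y _ _ ?_ ?_).mp hS
      · intro i hi
        exact hx i (by simpa [fv1] using hi)
      · intro j' hj'
        by_cases hjj : j' = j
        · subst hjj
          refine ⟨q, Nat.lt_succ_self q, ?_, ?_⟩
          · intro z
            simp only [Function.update_self]
            constructor
            · intro hz
              obtain ⟨m, hm⟩ := exists_blk hcs hc0 z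
              exact ⟨m, hm, hz⟩
            · rintro ⟨m, hz, hmem⟩
              exact hmem
          · intro z
            simp only [Function.update_self]
            exact Iff.rfl
        · obtain ⟨s, hs, h1, h2⟩ := hX j' (by
            simp only [fv2, Finset.mem_sdiff, Finset.mem_singleton]
            exact ⟨hj', hjj⟩)
          refine ⟨s, Nat.lt_succ_of_lt hs, ?_, ?_⟩
          · intro z
            simp only [Function.update_of_ne hjj, Function.update_of_ne (Nat.ne_of_lt hs)]
            exact h1 z
          · intro z
            simp only [Function.update_of_ne hjj, Function.update_of_ne (Nat.ne_of_lt hs)]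
            exact h2 z
    · rintro ⟨S, hS⟩
      set Sl : ∀ m, Set ↥(Set.Ico (ds m) (ds (m+1))) := fun m =>
        {z | (z : ℕ) ∈ S} with hSl
      choose T hT' using fun m => reach_set (hT m).symm (Sl m)
      refine ⟨{z : ℕ | ∃ m, ∃ hz : z ∈ Set.Ico (cs m) (cs (m+1)),
        (⟨z, hz⟩ : ↥(Set.Ico (cs m) (cs (m+1)))) ∈ T m}, ?_⟩
      refine (comp_lemma P cs ds hcs hc0 hds hd0 φ k' p (q+1) hqd
        vloc (fun m => Function.update (Vloc m) q (T m))
        wloc (fun m => Function.update (Wloc m) q (Sl m))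
        (fun m => (hT' m).symm)
        x y _ _ ?_ ?_).mpr hS
      · intro i hi
        exact hx i (by simpa [fv1] using hi)
      · intro j' hj'
        by_cases hjj : j' = j
        · subst hjj
          refine ⟨q, Nat.lt_succ_self q, ?_, ?_⟩
          · intro z
            simp only [Function.update_self]
            exact Iff.rfl
          · intro z
            simp only [Function.update_self]
            constructor
            · intro hz
              obtain ⟨m, hm⟩ := exists_blk hds hd0 z
              exact ⟨m, hm, hz⟩
            · rintro ⟨m, hz, hmem⟩
              exact hmem
        · obtain ⟨s, hs, h1, h2⟩ := hX j' (by
            simp only [fv2, Finset.mem_sdiff, Finset.mem_singleton]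
            exact ⟨hj', hjj⟩)
          refine ⟨s, Nat.lt_succ_of_lt hs, ?_, ?_⟩
          · intro z
            simp only [Function.update_of_ne hjj, Function.update_of_ne (Nat.ne_of_lt hs)]
            exact h1 z
          · intro z
            simp only [Function.update_of_ne hjj, Function.update_of_ne (Nat.ne_of_lt hs)]
            exact h2 z

end Comp
end Paper

open Paper

/-- If `H = {h 0 < h 1 < ⋯}` is uniformly homogeneous for the labelled linear
ordering `M = (ℕ, <, P₁, …, Pₙ)`, then `H` is not MSO-definable in `M`. -/
theorem stmt_9 {n : ℕ} (P : Fin n → Set ℕ) (h : ℕ → ℕ)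
    (hH : UniformlyHomogeneous P h) :
    ¬ MSO.Definable (fun x y : ℕ => x < y) P (Set.range h) := by
  classical
  rintro ⟨φ, hf1, hf2, hiff⟩
  obtain ⟨hmono, hhom⟩ := hH
  set κ := max (MSO.qd φ) 2 with hκdef
  set K := κ + 2 with hKdef
  have hom := hhom K
  -- membership facts
  have memC0 : h (K+0) ∈ Set.Ico (h (K+0)) (h (K+2)) := ⟨le_refl _, hmono (by omega)⟩
  have memCa : h (K+1) ∈ Set.Ico (h (K+0)) (h (K+2)) :=
    ⟨le_of_lt (hmono (by omega)), hmono (by omega)⟩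
  have memB0 : h (K+0) ∈ Set.Ico (h (K+0)) (h (K+1)) := ⟨le_refl _, hmono (by omega)⟩
  have memD : ∀ l : ℕ, h (K+l) ∈ Set.Ico (h (K+l)) (h (K+(l+1))) :=
    fun l => ⟨le_refl _, hmono (by omega)⟩
  haveI nC : Nonempty ↥(Set.Ico (h (K+0)) (h (K+2))) := ⟨⟨_, memC0⟩⟩
  haveI nB : Nonempty ↥(Set.Ico (h (K+0)) (h (K+1))) := ⟨⟨_, memB0⟩⟩
  -- the doubled block and the single block have the same (κ+1)-type
  have hCB := MSO.typeof_eq_of_equivType (hom 0 2 0 1 (by omega) (by omega))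
    (show (κ+1) + 1 ≤ K by omega)
    (fun _ => (⟨h (K+0), memC0⟩ : ↥(Set.Ico (h (K+0)) (h (K+2))))) (fun _ => ∅)
    (fun _ => (⟨h (K+0), memB0⟩ : ↥(Set.Ico (h (K+0)) (h (K+1))))) (fun _ => ∅)
  -- pick the twin y of the interior H-point h (K+1)
  obtain ⟨yb, hyb⟩ := MSO.reach_elem hCB ⟨h (K+1), memCa⟩
  -- y is not in H
  have hynotin : (↑yb : ℕ) ∉ Set.range h := by
    obtain ⟨κ', hκ'⟩ : ∃ κ', κ = κ' + 1 := ⟨κ - 1, by omega⟩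
    have hyb2 := hyb
    rw [hκ'] at hyb2
    obtain ⟨b2, hb2⟩ := MSO.reach_elem hyb2 ⟨h (K+0), memC0⟩
    have hdr := MSO.diag_rel (MSO.typeof_diag hb2)
      (⟨1, by omega⟩ : Fin 2) (⟨0, by omega⟩ : Fin 2)
    have hlt : (↑b2 : ℕ) < ↑yb := hdr.mp (hmono (by omega))
    have hb2mem : h (K+0) ≤ ↑b2 ∧ (↑b2 : ℕ) < h (K+1) := b2.2
    have hybmem : h (K+0) ≤ ↑yb ∧ (↑yb : ℕ) < h (K+1) := yb.2
    rintro ⟨t, ht⟩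
    have h1 : h t < h (K+1) := by omega
    have h2 : h (K+0) < h t := by omega
    have l1 : t < K + 1 := hmono.lt_iff_lt.mp h1
    have l2 : K + 0 < t := hmono.lt_iff_lt.mp h2
    omega
  -- the cut systems
  set cs : ℕ → ℕ := fun m => match m with
    | 0 => 0 | 1 => h (K+0) | (m'+2) => h (K+(m'+2)) with hcsdef
  set ds : ℕ → ℕ := fun m => match m with
    | 0 => 0 | (m'+1) => h (K+m') with hdsdef
  have hcs : StrictMono cs := by
    apply strictMono_nat_of_lt_succ
    intro m
    rcases m with _ | _ | m'
    · exact lt_of_le_of_lt (Nat.zero_le (h 0)) (hmono (by omega))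
    · exact hmono (by omega)
    · exact hmono (by omega)
  have hds : StrictMono ds := by
    apply strictMono_nat_of_lt_succ
    intro m
    rcases m with _ | m'
    · exact lt_of_le_of_lt (Nat.zero_le (h 0)) (hmono (by omega))
    · exact hmono (by omega)
  have hc0 : cs 0 = 0 := rfl
  have hd0 : ds 0 = 0 := rfl
  have pf0c : (0:ℕ) ∈ Set.Ico (cs 0) (cs 1) :=
    ⟨le_refl 0, lt_of_le_of_lt (Nat.zero_le (h 0)) (hmono (by omega))⟩
  have pf0d : (0:ℕ) ∈ Set.Ico (ds 0) (ds 1) :=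
    ⟨le_refl 0, lt_of_le_of_lt (Nat.zero_le (h 0)) (hmono (by omega))⟩
  -- the remaining blocks: reach-matched junk parameters
  have hpair : ∀ m' : ℕ,
      MSO.typeof (subRel (fun x y : ℕ => x < y) (Set.Ico (h (K+(m'+2))) (h (K+(m'+3)))))
        (subPred P (Set.Ico (h (K+(m'+2))) (h (K+(m'+3))))) (κ+1) 0 0
        (fun _ => ⟨h (K+(m'+2)), memD (m'+2)⟩) (fun _ => ∅)
      = MSO.typeof (subRel (fun x y : ℕ => x < y) (Set.Ico (h (K+(m'+1))) (h (K+(m'+2)))))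
        (subPred P (Set.Ico (h (K+(m'+1))) (h (K+(m'+2))))) (κ+1) 0 0
        (fun _ => ⟨h (K+(m'+1)), memD (m'+1)⟩) (fun _ => ∅) := by
    intro m'
    haveI : Nonempty ↥(Set.Ico (h (K+(m'+2))) (h (K+(m'+3)))) := ⟨⟨_, memD (m'+2)⟩⟩
    haveI : Nonempty ↥(Set.Ico (h (K+(m'+1))) (h (K+(m'+2)))) := ⟨⟨_, memD (m'+1)⟩⟩
    exact MSO.typeof_eq_of_equivType (hom (m'+2) (m'+3) (m'+1) (m'+2) (by omega) (by omega))
      (by omega) _ _ _ _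
  choose bf hbf using fun m' => MSO.reach_elem (hpair m') ⟨h (K+(m'+2)), memD (m'+2)⟩
  -- global transfer
  have hsat_iff := comp_lemma P cs ds hcs hc0 hds hd0 φ κ 1 0 (le_max_left _ _)
    (fun m => match m with
      | 0 => fun _ => ⟨0, pf0c⟩
      | 1 => Function.update (fun _ => (⟨h (K+0), memC0⟩ : ↥(Set.Ico (h (K+0)) (h (K+2)))))
          0 ⟨h (K+1), memCa⟩
      | (m'+2) => Function.update
          (fun _ => (⟨h (K+(m'+2)), memD (m'+2)⟩ : ↥(Set.Ico (h (K+(m'+2))) (h (K+(m'+3))))))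
          0 ⟨h (K+(m'+2)), memD (m'+2)⟩)
    (fun _ _ => ∅)
    (fun m => match m with
      | 0 => fun _ => ⟨0, pf0d⟩
      | 1 => Function.update (fun _ => (⟨h (K+0), memB0⟩ : ↥(Set.Ico (h (K+0)) (h (K+1)))))
          0 yb
      | (m'+2) => Function.update
          (fun _ => (⟨h (K+(m'+1)), memD (m'+1)⟩ : ↥(Set.Ico (h (K+(m'+1))) (h (K+(m'+2))))))
          0 (bf m'))
    (fun _ _ => ∅)
    (by
      intro m
      rcases m with _ | _ | m'
      · rfl
      · exact hyb
      · exact hbf m')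
    (fun _ => h (K+1)) (fun _ => (↑yb : ℕ)) (fun _ => ∅) (fun _ => ∅)
    (by
      intro i hi
      exact ⟨0, one_pos, 1, rfl, rfl⟩)
    (by
      intro j hj
      exact absurd (hf2 ▸ hj) (Finset.notMem_empty j))
  -- derive the contradiction
  have hmem1 : h (K+1) ∈ Set.range h := ⟨K+1, rfl⟩
  have hsatc : MSO.Sat (fun x y : ℕ => x < y) P (fun _ => h (K+1)) (fun _ => ∅) φ := by
    have := (hiff _).mp hmem1 (fun _ => h (K+1)) (fun _ => ∅)
    rwa [show Function.update (fun _ => h (K+1)) 0 (h (K+1)) = fun _ => h (K+1) from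
      Function.update_eq_self 0 _] at this
  have hsaty := hsat_iff.mp hsatc
  refine hynotin ((hiff _).mpr ?_)
  intro v V
  refine (MSO.sat_congr φ (fun _ => (↑yb : ℕ)) (Function.update v 0 ↑yb)
    (fun _ => ∅) V ?_ ?_).mp hsaty
  · intro i hi
    have : i = 0 := Finset.mem_singleton.mp (hf1 hi)
    subst this
    rw [Function.update_self]
  · intro j hj
    exact absurd (hf2 ▸ hj) (Finset.notMem_empty j)
end
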